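/- arXiv:2601.14206 — 4 statements merged into one kernel-verified Lean document; each statement's English description precedes it below -/
import Mathlib

section
/- Let k, R, N be positive integers with N > 4kR, and let H be a k-local Hamiltonian of range R on the open chain of N qubit sites. Suppose that for every 0 ≤ p ≤ N there is E_p ∈ ℂ with H |W^p⟩ = E_p |W^p⟩. Then there exist Ω, ω ∈ ℂ such that E_p = Ω + ω·p for all 0 ≤ p ≤ N. -/
open scoped BigOperators
set_option linter.unusedSectionVars false

noncomputable section

/-- The state space of a collection of qubits indexed by `V`: the complex vector space of
functions from configurations `V → Bool` to `ℂ`. -/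
abbrev QState (V : Type*) := (V → Bool) → ℂ

section Defs

variable {V : Type*} [Fintype V] [DecidableEq V]

/-- The standard basis vector associated to the configuration `f`. -/
def basisVec (f : V → Bool) : QState V := fun g => if g = f then 1 else 0

/-- The creation operator `s†_i` at site `i`. -/
def creOp (i : V) : Module.End ℂ (QState V) where
  toFun ψ := fun g => if g i = true then ψ (Function.update g i false) else 0
  map_add' ψ φ := by funext g; by_cases h : g i = true <;> simp [h]
  map_smul' a ψ := by funext g; by_cases h : g i = true <;> simp [h]

/-- The annihilation operator `s_i` at site `i`. -/
def annOp (i : V) : Module.End ℂ (QState V) where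
  toFun ψ := fun g => if g i = false then ψ (Function.update g i true) else 0
  map_add' ψ φ := by funext g; by_cases h : g i = false <;> simp [h]
  map_smul' a ψ := by funext g; by_cases h : g i = false <;> simp [h]

@[simp] lemma creOp_apply (i : V) (ψ : QState V) (g : V → Bool) :
    creOp i ψ g = if g i = true then ψ (Function.update g i false) else 0 := rfl

variable (V)

/-- The vacuum `|0̄⟩`: the basis vector of the all-false configuration. -/
def vac : QState V := basisVec (fun _ => false)

/-- The total raising operator `S† = ∑ i, s†_i`. -/
def Sdag : Module.End ℂ (QState V) := ∑ i : V, creOp i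

/-- The number operator `N̂ = ∑ i, s†_i s_i`. -/
def numOp : Module.End ℂ (QState V) := ∑ i : V, creOp i * annOp i

/-- The unnormalized Dicke state `|W^p⟩ = (S†)^p |0̄⟩`. -/
def WState (p : ℕ) : QState V := ((Sdag V) ^ p) (vac V)

variable {V}

/-- Creation operators at different sites commute. -/
lemma creOp_commute (i j : V) : Commute (creOp (V := V) i) (creOp j) := by
  rcases eq_or_ne i j with rfl | hij
  · exact Commute.refl _
  · show creOp i * creOp j = creOp j * creOp i
    refine LinearMap.ext fun ψ => funext fun g => ?_
    simp only [Module.End.mul_apply, creOp_apply]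
    by_cases hi : g i = true <;> by_cases hj : g j = true <;>
      simp [hi, hj, Function.update_of_ne hij, Function.update_of_ne hij.symm,
        Function.update_comm hij]

/-- The product `∏_{j ∈ Y} s†_j` of creation operators over a finite set `Y` of sites
(the operators commute, so the product is well defined; the empty product is the identity). -/
def creProd (Y : Finset V) : Module.End ℂ (QState V) :=
  Y.noncommProd creOp fun a _ b _ _ => creOp_commute a b

/-- The operator `O` is supported on the set of sites `X`. -/
def SupportedOn (O : Module.End ℂ (QState V)) (X : Set V) : Prop :=
  (∀ f g : V → Bool, (∃ i ∉ X, f i ≠ g i) → O (basisVec f) g = 0) ∧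
  (∀ f f' g g' : V → Bool,
    (∀ i ∈ X, f i = f' i) → (∀ i ∈ X, g i = g' i) →
    (∀ i ∉ X, f i = g i) → (∀ i ∉ X, f' i = g' i) →
    O (basisVec f) g = O (basisVec f') g')

/-- An operator is `k`-local if it is a finite sum of operators each supported
on a subset of at most `k` sites. -/
def IsKLocal (k : ℕ) (O : Module.End ℂ (QState V)) : Prop :=
  ∃ (n : ℕ) (h : Fin n → Module.End ℂ (QState V)) (X : Fin n → Finset V),
    (∀ t, SupportedOn (h t) ↑(X t)) ∧ (∀ t, (X t).card ≤ k) ∧ O = ∑ t, h t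

/-- Vertices `i` and `j` are within distance `r` in the graph `G`:
they are joined by a walk of length at most `r`. -/
def WithinDist (G : SimpleGraph V) (r : ℕ) (i j : V) : Prop :=
  ∃ w : G.Walk i j, w.length ≤ r

/-- The ball of radius `r` around vertex `i` in the graph `G`. -/
def gball (G : SimpleGraph V) (i : V) (r : ℕ) : Set V := {j | WithinDist G r i j}

/-- `diam(X) ≤ R` with respect to `G`: every two vertices of `X` are within distance `R - 1`. -/
def GDiamLE (G : SimpleGraph V) (X : Finset V) (R : ℕ) : Prop :=
  ∀ i ∈ X, ∀ j ∈ X, WithinDist G (R - 1) i j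

/-- `H` is a Hamiltonian of range `R` with respect to the graph `G`: a finite sum over
nonempty subsets `X` with `diam(X) ≤ R` of operators supported on `X`. -/
def IsRangeHam (G : SimpleGraph V) (R : ℕ) (H : Module.End ℂ (QState V)) : Prop :=
  ∃ h : Finset V → Module.End ℂ (QState V),
    (∀ X, SupportedOn (h X) ↑X) ∧
    (∀ X, h X ≠ 0 → X.Nonempty ∧ GDiamLE G X R) ∧
    H = ∑ X : Finset V, h X

/-- `H` is a `k`-local Hamiltonian of range `R` with respect to the graph `G`. -/
def IsKLocalRangeHam (G : SimpleGraph V) (k R : ℕ) (H : Module.End ℂ (QState V)) : Prop :=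
  ∃ h : Finset V → Module.End ℂ (QState V),
    (∀ X, SupportedOn (h X) ↑X) ∧
    (∀ X, h X ≠ 0 → X.Nonempty ∧ GDiamLE G X R ∧ X.card ≤ k) ∧
    H = ∑ X : Finset V, h X

/-- An invertible linear operator `M` is `δ`-locality-preserving with respect to `G` if
conjugation by `M` or `M⁻¹` increases the range of any operator by at most `δ`. -/
def LocalityPreserving (G : SimpleGraph V) (δ : ℕ) (M : QState V ≃ₗ[ℂ] QState V) : Prop :=
  ∀ R : ℕ, 0 < R → ∀ O : Module.End ℂ (QState V), IsRangeHam G R O →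
    IsRangeHam G (R + δ) (M.toLinearMap ∘ₗ O ∘ₗ M.symm.toLinearMap) ∧
    IsRangeHam G (R + δ) (M.symm.toLinearMap ∘ₗ O ∘ₗ M.toLinearMap)

end Defs

section Chain

/-- Distance between two sites of the open chain `{0, …, N-1}`. -/
def chainDist {N : ℕ} (i j : Fin N) : ℕ := ((i : ℤ) - (j : ℤ)).natAbs

/-- `diam(X) ≤ R` on the open chain: `diam(X) = 1 + max |i - j|`. -/
def ChainDiamLE {N : ℕ} (X : Finset (Fin N)) (R : ℕ) : Prop :=
  ∀ i ∈ X, ∀ j ∈ X, chainDist i j + 1 ≤ R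

/-- `H` is a Hamiltonian of range `R` on the open chain of `N` sites. -/
def IsChainRangeHam {N : ℕ} (R : ℕ) (H : Module.End ℂ (QState (Fin N))) : Prop :=
  ∃ h : Finset (Fin N) → Module.End ℂ (QState (Fin N)),
    (∀ X, SupportedOn (h X) ↑X) ∧
    (∀ X, h X ≠ 0 → X.Nonempty ∧ ChainDiamLE X R) ∧
    H = ∑ X : Finset (Fin N), h X

/-- `H` is a `k`-local Hamiltonian of range `R` on the open chain of `N` sites. -/
def IsChainKLocalRangeHam {N : ℕ} (k R : ℕ) (H : Module.End ℂ (QState (Fin N))) : Prop :=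
  ∃ h : Finset (Fin N) → Module.End ℂ (QState (Fin N)),
    (∀ X, SupportedOn (h X) ↑X) ∧
    (∀ X, h X ≠ 0 → X.Nonempty ∧ ChainDiamLE X R ∧ X.card ≤ k) ∧
    H = ∑ X : Finset (Fin N), h X

end Chain

end
noncomputable section AuxProof

variable {V : Type*} [Fintype V] [DecidableEq V]

/-- Number of `true` sites of a configuration. -/
def cnt (f : V → Bool) : ℕ := (Finset.univ.filter (fun i => f i = true)).card

lemma cnt_update_true (f : V → Bool) (j : V) (h : f j = false) :
    cnt (Function.update f j true) = cnt f + 1 := by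
  unfold cnt
  have hset : (Finset.univ.filter (fun i => Function.update f j true i = true))
      = insert j (Finset.univ.filter (fun i => f i = true)) := by
    ext i
    rcases eq_or_ne i j with rfl | hij
    · simp [h]
    · simp [Function.update_of_ne hij, hij]
  rw [hset, Finset.card_insert_of_notMem (by simp [h])]

lemma cnt_update_false (f : V → Bool) (j : V) (h : f j = true) :
    cnt f = cnt (Function.update f j false) + 1 := by
  have h2 : Function.update f j false j = false := by simp
  have key := cnt_update_true (Function.update f j false) j h2
  have hf : Function.update (Function.update f j false) j true = f := by
    funext i
    rcases eq_or_ne i j with rfl | hij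
    · simp [h]
    · simp [Function.update_of_ne hij]
  rw [hf] at key
  exact key

lemma Sdag_apply (ψ : QState V) (g : V → Bool) :
    Sdag V ψ g = ∑ i : V, (if g i = true then ψ (Function.update g i false) else 0) := by
  unfold Sdag
  rw [LinearMap.sum_apply, Finset.sum_apply]
  rfl

lemma WState_apply (p : ℕ) (g : V → Bool) :
    WState V p g = if cnt g = p then (p.factorial : ℂ) else 0 := by
  induction p generalizing g with
  | zero =>
    unfold WState vac basisVec
    simp only [pow_zero, Module.End.one_apply, Nat.factorial_zero, Nat.cast_one]
    by_cases h : cnt g = 0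
    · have hg : g = fun _ => false := by
        funext i
        by_contra hi
        have hi' : g i = true := by revert hi; cases g i <;> simp
        have hmem : i ∈ Finset.univ.filter (fun i => g i = true) := by simp [hi']
        unfold cnt at h
        rw [Finset.card_eq_zero.mp h] at hmem
        simp at hmem
      simp [hg, cnt]
    · have hg : ¬ (g = fun _ => false) := by
        rintro rfl
        exact h (by simp [cnt])
      simp [h, hg]
  | succ p ih =>
    have hW : WState V (p + 1) = Sdag V (WState V p) := by
      unfold WState; rw [pow_succ']; rfl
    rw [hW, Sdag_apply]
    have hterm : ∀ i : V, (if g i = true then WState V p (Function.update g i false) else 0)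
        = if g i = true ∧ cnt g = p + 1 then (p.factorial : ℂ) else 0 := by
      intro i
      by_cases hi : g i = true
      · rw [ih]
        have hc := cnt_update_false g i hi
        by_cases hcg : cnt g = p + 1
        · have h1 : cnt (Function.update g i false) = p := by omega
          simp [hi, hcg, h1]
        · have h1 : cnt (Function.update g i false) ≠ p := by omega
          simp [hi, hcg, h1]
      · simp [hi]
    rw [Finset.sum_congr rfl (fun i _ => hterm i)]
    by_cases hcg : cnt g = p + 1
    · simp only [hcg, and_true]
      rw [← Finset.sum_filter, Finset.sum_const, nsmul_eq_mul]
      have hcard : (Finset.univ.filter (fun i => g i = true)).card = p + 1 := hcg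
      rw [hcard, if_pos trivial, Nat.factorial_succ]
      push_cast
      ring
    · simp [hcg]

lemma apply_expand (T : Module.End ℂ (QState V)) (ψ : QState V) (g : V → Bool) :
    T ψ g = ∑ f : V → Bool, ψ f * T (basisVec f) g := by
  have hψ : ψ = ∑ f : V → Bool, ψ f • basisVec f := by
    funext x
    rw [Finset.sum_apply]
    simp [basisVec, mul_ite]
  conv_lhs => rw [hψ]
  rw [map_sum, Finset.sum_apply]
  exact Finset.sum_congr rfl fun f _ => by rw [map_smul]; rfl

lemma shift_sum {X : Finset V} {h : Module.End ℂ (QState V)} (hs : SupportedOn h ↑X)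
    {j : V} (hj : j ∉ X) {g : V → Bool} (hg : g j = false) (q : ℕ) :
    ∑ f ∈ Finset.univ.filter (fun f => cnt f = q + 1),
        h (basisVec f) (Function.update g j true)
      = ∑ f ∈ Finset.univ.filter (fun f => cnt f = q), h (basisVec f) g := by
  have hj' : j ∉ (↑X : Set V) := by simpa using hj
  have hL : ∑ f ∈ (Finset.univ.filter (fun f => cnt f = q + 1)).filter (fun f => f j = true),
      h (basisVec f) (Function.update g j true)
      = ∑ f ∈ Finset.univ.filter (fun f => cnt f = q + 1),
        h (basisVec f) (Function.update g j true) := by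
    apply Finset.sum_filter_of_ne
    intro f _ hne
    by_contra hfj
    have hfj' : f j = false := by revert hfj; cases f j <;> simp
    exact hne (hs.1 f (Function.update g j true) ⟨j, hj', by simp [hfj']⟩)
  have hR : ∑ f ∈ (Finset.univ.filter (fun f => cnt f = q)).filter (fun f => f j = false),
      h (basisVec f) g
      = ∑ f ∈ Finset.univ.filter (fun f => cnt f = q), h (basisVec f) g := by
    apply Finset.sum_filter_of_ne
    intro f _ hne
    by_contra hfj
    have hfj' : f j = true := by revert hfj; cases f j <;> simp
    exact hne (hs.1 f g ⟨j, hj', by simp [hfj', hg]⟩)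
  rw [← hL, ← hR]
  apply Finset.sum_nbij' (fun f => Function.update f j false) (fun f => Function.update f j true)
  · intro f hf
    simp only [Finset.mem_filter, Finset.mem_univ, true_and] at hf ⊢
    obtain ⟨hc, hfj⟩ := hf
    have := cnt_update_false f j hfj
    exact ⟨by omega, by simp⟩
  · intro f hf
    simp only [Finset.mem_filter, Finset.mem_univ, true_and] at hf ⊢
    obtain ⟨hc, hfj⟩ := hf
    have := cnt_update_true f j hfj
    exact ⟨by omega, by simp⟩
  · intro f hf
    simp only [Finset.mem_filter, Finset.mem_univ, true_and] at hf
    funext i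
    rcases eq_or_ne i j with rfl | hij
    · simp [hf.2]
    · simp [Function.update_of_ne hij]
  · intro f hf
    simp only [Finset.mem_filter, Finset.mem_univ, true_and] at hf
    funext i
    rcases eq_or_ne i j with rfl | hij
    · simp [hf.2]
    · simp [Function.update_of_ne hij]
  · intro f hf
    simp only [Finset.mem_filter, Finset.mem_univ, true_and] at hf
    obtain ⟨hc, hfj⟩ := hf
    by_cases hAgr : ∀ i, i ∉ (↑X : Set V) → f i = Function.update g j true i
    · apply hs.2
      · intro i hi
        exact (Function.update_of_ne (fun he => hj' (by rw [← he]; exact hi)) _ _).symm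
      · intro i hi
        exact Function.update_of_ne (fun he => hj' (by rw [← he]; exact hi)) _ _
      · exact hAgr
      · intro i hi
        rcases eq_or_ne i j with rfl | hij
        · simp [hg]
        · rw [Function.update_of_ne hij, hAgr i hi, Function.update_of_ne hij]
    · push_neg at hAgr
      obtain ⟨i, hiX, hne⟩ := hAgr
      have hij : i ≠ j := by
        rintro rfl
        exact hne (by simp [hfj])
      rw [hs.1 f (Function.update g j true) ⟨i, hiX, hne⟩,
        hs.1 (Function.update f j false) g
          ⟨i, hiX, by rwa [Function.update_of_ne hij, ← Function.update_of_ne hij true g]⟩]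

lemma perX {X : Finset V} {h : Module.End ℂ (QState V)} (hs : SupportedOn h ↑X)
    {a b : V} (hab : a ≠ b) (hX : a ∉ X ∨ b ∉ X)
    {g : V → Bool} (hga : g a = false) (hgb : g b = false) (p : ℕ) :
    (∑ f ∈ Finset.univ.filter (fun f => cnt f = p + 2),
        h (basisVec f) (Function.update (Function.update g a true) b true))
      + ∑ f ∈ Finset.univ.filter (fun f => cnt f = p), h (basisVec f) g
    = (∑ f ∈ Finset.univ.filter (fun f => cnt f = p + 1),
        h (basisVec f) (Function.update g a true))
      + ∑ f ∈ Finset.univ.filter (fun f => cnt f = p + 1),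
        h (basisVec f) (Function.update g b true) := by
  rcases hX with ha | hb
  · rw [Function.update_comm hab]
    have h1 := shift_sum hs ha (g := Function.update g b true)
      (by rw [Function.update_of_ne hab]; exact hga) (p + 1)
    have h2 := shift_sum hs ha hga p
    rw [h1, h2]
    ring
  · have h1 := shift_sum hs hb (g := Function.update g a true)
      (by rw [Function.update_of_ne (Ne.symm hab)]; exact hgb) (p + 1)
    have h2 := shift_sum hs hb hgb p
    rw [h1, h2]

end AuxProof
/-- Equal spacing of the Dicke tower for k-local Hamiltonians of range R
on the open chain of N qubit sites, when N > 4kR. -/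
theorem dicke_tower_equal_spacing_1D
    (k R N : ℕ) (hk : 0 < k) (hR : 0 < R) (hN : 0 < N) (hbig : 4 * k * R < N)
    (H : Module.End ℂ (QState (Fin N)))
    (hH : IsChainKLocalRangeHam k R H)
    (E : ℕ → ℂ)
    (hE : ∀ p ≤ N, H (WState (Fin N) p) = E p • WState (Fin N) p) :
    ∃ Ω ω : ℂ, ∀ p ≤ N, E p = Ω + ω * p := by
  obtain ⟨h, hsupp, hnz, hsum⟩ := hH
  -- Key eigenvalue identity
  have star : ∀ p ≤ N, ∀ g : Fin N → Bool, cnt g = p →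
      (∑ f ∈ Finset.univ.filter (fun f : Fin N → Bool => cnt f = p), H (basisVec f) g)
        = E p := by
    intro p hp g hg
    have h1 := congrFun (hE p hp) g
    rw [apply_expand] at h1
    have h2 : ∀ f : Fin N → Bool, WState (Fin N) p f * H (basisVec f) g
        = if cnt f = p then (p.factorial : ℂ) * H (basisVec f) g else 0 := by
      intro f; rw [WState_apply]; split <;> simp
    rw [Finset.sum_congr rfl (fun f _ => h2 f), ← Finset.sum_filter, ← Finset.mul_sum] at h1
    have h3 : (E p • WState (Fin N) p) g = E p * (p.factorial : ℂ) := by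
      have : (E p • WState (Fin N) p) g = E p * WState (Fin N) p g := rfl
      rw [this, WState_apply, if_pos hg]
    rw [h3] at h1
    have hfac : ((p.factorial : ℕ) : ℂ) ≠ 0 := Nat.cast_ne_zero.mpr p.factorial_ne_zero
    exact mul_left_cancel₀ hfac (h1.trans (mul_comm _ _))
  -- swap sums
  have hsum4 : ∀ (q : ℕ) (g' : Fin N → Bool),
      (∑ f ∈ Finset.univ.filter (fun f : Fin N → Bool => cnt f = q), H (basisVec f) g')
        = ∑ X : Finset (Fin N),
            ∑ f ∈ Finset.univ.filter (fun f : Fin N → Bool => cnt f = q),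
              h X (basisVec f) g' := by
    intro q g'
    rw [Finset.sum_comm]
    apply Finset.sum_congr rfl
    intro f _
    rw [hsum, LinearMap.sum_apply, Finset.sum_apply]
  -- second difference vanishes
  have hdiff : ∀ p, p + 2 ≤ N → E (p + 2) + E p = E (p + 1) + E (p + 1) := by
    intro p hp
    have hN2 : 2 ≤ N := by omega
    set a : Fin N := ⟨0, by omega⟩ with ha
    set b : Fin N := ⟨N - 1, by omega⟩ with hb
    have hab : a ≠ b := by
      intro hcontra
      have := congrArg Fin.val hcontra
      rw [ha, hb] at this
      simp at this
      omega
    set g : Fin N → Bool := fun x => decide (1 ≤ (x : ℕ) ∧ (x : ℕ) ≤ p) with hgdef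
    have hga : g a = false := by
      rw [hgdef]
      simp [ha]
    have hgb : g b = false := by
      rw [hgdef]
      simp only [hb, decide_eq_false_iff_not]
      rintro ⟨-, h2⟩
      omega
    have hcg : cnt g = p := by
      unfold cnt
      rw [← Finset.card_image_of_injective
        (Finset.univ.filter (fun x : Fin N => g x = true)) Fin.val_injective]
      have himg : (Finset.univ.filter (fun x : Fin N => g x = true)).image Fin.val
          = Finset.Icc 1 p := by
        ext n
        simp only [Finset.mem_image, Finset.mem_filter, Finset.mem_univ, true_and,
          Finset.mem_Icc, hgdef, decide_eq_true_eq]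
        constructor
        · rintro ⟨x, hx, rfl⟩; exact hx
        · intro hn; exact ⟨⟨n, by omega⟩, hn, rfl⟩
      rw [himg, Nat.card_Icc]
      omega
    have hc1 : cnt (Function.update g a true) = p + 1 := by
      rw [cnt_update_true g a hga, hcg]
    have hgab : (Function.update g a true) b = false := by
      rw [Function.update_of_ne (Ne.symm hab)]; exact hgb
    have hc12 : cnt (Function.update (Function.update g a true) b true) = p + 2 := by
      rw [cnt_update_true _ b hgab, hc1]
    have hc2 : cnt (Function.update g b true) = p + 1 := by
      rw [cnt_update_true g b hgb, hcg]
    have key : ∀ X : Finset (Fin N),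
        (∑ f ∈ Finset.univ.filter (fun f : Fin N → Bool => cnt f = p + 2),
            h X (basisVec f) (Function.update (Function.update g a true) b true))
          + ∑ f ∈ Finset.univ.filter (fun f : Fin N → Bool => cnt f = p),
              h X (basisVec f) g
        = (∑ f ∈ Finset.univ.filter (fun f : Fin N → Bool => cnt f = p + 1),
            h X (basisVec f) (Function.update g a true))
          + ∑ f ∈ Finset.univ.filter (fun f : Fin N → Bool => cnt f = p + 1),
              h X (basisVec f) (Function.update g b true) := by
      intro X
      by_cases hz : h X = 0
      · simp [hz]
      · obtain ⟨hXne, hdiam, hcard⟩ := hnz X hz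
        have hX : a ∉ X ∨ b ∉ X := by
          by_contra hcon
          push_neg at hcon
          have hd := hdiam a hcon.1 b hcon.2
          unfold chainDist at hd
          have hva : ((a : Fin N) : ℤ) = 0 := by rw [ha]; simp
          have hvb : ((b : Fin N) : ℤ) = (N : ℤ) - 1 := by
            rw [hb]; simp; omega
          rw [hva, hvb] at hd
          have hRk : R ≤ 4 * k * R := by
            calc R = 1 * R := (one_mul R).symm
            _ ≤ (4 * k) * R := Nat.mul_le_mul_right R (by omega)
          omega
        exact perX (hsupp X) hab hX hga hgb p
    have keysum :
        (∑ X : Finset (Fin N),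
          ((∑ f ∈ Finset.univ.filter (fun f : Fin N → Bool => cnt f = p + 2),
              h X (basisVec f) (Function.update (Function.update g a true) b true))
            + ∑ f ∈ Finset.univ.filter (fun f : Fin N → Bool => cnt f = p),
                h X (basisVec f) g))
        = ∑ X : Finset (Fin N),
          ((∑ f ∈ Finset.univ.filter (fun f : Fin N → Bool => cnt f = p + 1),
              h X (basisVec f) (Function.update g a true))
            + ∑ f ∈ Finset.univ.filter (fun f : Fin N → Bool => cnt f = p + 1),
                h X (basisVec f) (Function.update g b true)) :=
      Finset.sum_congr rfl fun X _ => key X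
    rw [Finset.sum_add_distrib, Finset.sum_add_distrib,
      ← hsum4 (p + 2) _, ← hsum4 p _, ← hsum4 (p + 1) _, ← hsum4 (p + 1) _] at keysum
    rw [star (p + 2) hp _ hc12, star p (by omega) _ hcg,
      star (p + 1) (by omega) _ hc1, star (p + 1) (by omega) _ hc2] at keysum
    exact keysum
  -- conclude
  have step : ∀ p, p + 1 ≤ N → E (p + 1) = E p + (E 1 - E 0) := by
    intro p
    induction p with
    | zero => intro _; ring
    | succ q ih =>
      intro hq
      have h2 := hdiff q (by omega)
      have h3 := ih (by omega)
      linear_combination h2 + h3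
  refine ⟨E 0, E 1 - E 0, ?_⟩
  intro p hp
  induction p with
  | zero => simp
  | succ q ih =>
    rw [step q hp, ih (by omega)]
    push_cast
    ring
end

section
/- Let R, N be positive integers with N > 4R, and let H be a Hamiltonian of range R on the open chain of N qubit sites such that H |W⟩ = λ |W⟩ for some λ ∈ ℂ. Then there exist Ω, ω ∈ ℂ and, for each nonempty subset X ⊆ V with diam(X) ≤ 2R, an operator h_X supported on X satisfying h_X |W⟩ = 0 and h_X |0̄⟩ = 0, such that H = Ω·I + ω·N̂ + ∑_X h_X. -/
open scoped BigOperators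
set_option linter.unusedSectionVars false

noncomputable section
namespace WP

open Finset

variable {N : ℕ}

/-- the all-false configuration -/
def c0 : Fin N → Bool := fun _ => false

/-- the single-excitation configuration -/
def dl (i : Fin N) : Fin N → Bool := Function.update (fun _ => false) i true

lemma dl_apply (i j : Fin N) : dl i j = if j = i then true else false := by
  simp [dl, Function.update_apply]

@[simp] lemma c0_apply (j : Fin N) : c0 j = false := rfl

@[simp] lemma dl_self (i : Fin N) : dl i i = true := by simp [dl_apply]

lemma dl_ne {i j : Fin N} (h : j ≠ i) : dl i j = false := by simp [dl_apply, h]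

lemma basisVec_apply (f g : Fin N → Bool) : basisVec f g = if g = f then 1 else 0 := rfl

lemma vac_eq : vac (Fin N) = basisVec c0 := rfl

lemma eq_dl_iff (g : Fin N → Bool) (i : Fin N) :
    g = dl i ↔ (g i = true ∧ Function.update g i false = c0) := by
  constructor
  · rintro rfl
    refine ⟨by simp, ?_⟩
    funext j
    rcases eq_or_ne j i with rfl | h
    · simp
    · simp [Function.update_apply, h, dl_ne h]
  · rintro ⟨h1, h2⟩
    funext j
    rcases eq_or_ne j i with rfl | h
    · simp [h1]
    · have := congrFun h2 j
      simp [Function.update_apply, h] at this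
      simp [dl_ne h, this, c0_apply]

lemma creOp_vac (i : Fin N) : creOp i (vac (Fin N)) = basisVec (dl i) := by
  funext g
  rw [creOp_apply, vac_eq, basisVec_apply, basisVec_apply]
  by_cases h : g i = true
  · by_cases h2 : Function.update g i false = c0
    · rw [if_pos h, if_pos h2, if_pos ((eq_dl_iff g i).2 ⟨h, h2⟩)]
    · rw [if_pos h, if_neg h2, if_neg]
      intro hg
      exact h2 ((eq_dl_iff g i).1 hg).2
  · rw [if_neg h, if_neg]
    intro hg
    exact h ((eq_dl_iff g i).1 hg).1

lemma WState_one : WState (Fin N) 1 = ∑ i : Fin N, basisVec (dl i) := by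
  have : WState (Fin N) 1 = Sdag (Fin N) (vac (Fin N)) := by
    rw [WState, pow_one]
  rw [this, Sdag, LinearMap.sum_apply]
  exact Finset.sum_congr rfl fun i _ => creOp_vac i

lemma WState_one_apply (g : Fin N → Bool) :
    WState (Fin N) 1 g = ∑ i : Fin N, (if g = dl i then (1:ℂ) else 0) := by
  rw [WState_one, Finset.sum_apply]
  rfl

lemma annOp_apply (i : Fin N) (ψ : QState (Fin N)) (g : Fin N → Bool) :
    annOp i ψ g = if g i = false then ψ (Function.update g i true) else 0 := rfl

lemma nOp_apply (i : Fin N) (ψ : QState (Fin N)) (g : Fin N → Bool) :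
    (creOp i * annOp i) ψ g = if g i = true then ψ g else 0 := by
  show creOp i (annOp i ψ) g = _
  rw [creOp_apply]
  by_cases h : g i = true
  · rw [if_pos h, if_pos h, annOp_apply, if_pos (by simp), Function.update_idem]
    congr 1
    rw [← h, Function.update_eq_self]
  · rw [if_neg h, if_neg h]

lemma numOp_apply (ψ : QState (Fin N)) (g : Fin N → Bool) :
    numOp (Fin N) ψ g = ∑ i : Fin N, (if g i = true then ψ g else 0) := by
  rw [numOp, LinearMap.sum_apply, Finset.sum_apply]
  exact Finset.sum_congr rfl fun i _ => nOp_apply i ψ g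

lemma numOp_vac : numOp (Fin N) (vac (Fin N)) = 0 := by
  funext g
  rw [numOp_apply]
  show _ = (0:ℂ)
  rcases eq_or_ne g c0 with rfl | h
  · exact Finset.sum_eq_zero fun i _ => by simp [c0]
  · refine Finset.sum_eq_zero fun i _ => ?_
    rw [vac_eq, basisVec_apply, if_neg h]
    simp

lemma numOp_basis_dl (j : Fin N) :
    numOp (Fin N) (basisVec (dl j)) = basisVec (dl j) := by
  funext g
  rw [numOp_apply, basisVec_apply]
  rcases eq_or_ne g (dl j) with rfl | h
  · rw [if_pos rfl, Finset.sum_eq_single j]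
    · simp [basisVec_apply]
    · intro i _ hij
      rw [dl_ne hij]
      simp
    · intro h; exact absurd (Finset.mem_univ j) h
  · rw [if_neg h]
    refine Finset.sum_eq_zero fun i _ => ?_
    simp

lemma numOp_W : numOp (Fin N) (WState (Fin N) 1) = WState (Fin N) 1 := by
  rw [WState_one, map_sum]
  exact Finset.sum_congr rfl fun i _ => numOp_basis_dl i

/-! ### SupportedOn lemmas -/

lemma sOn_zero (X : Set (Fin N)) :
    SupportedOn (0 : Module.End ℂ (QState (Fin N))) X :=
  ⟨fun _ _ _ => rfl, fun _ _ _ _ _ _ _ _ => rfl⟩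

lemma sOn_add {O₁ O₂ : Module.End ℂ (QState (Fin N))} {X : Set (Fin N)}
    (h1 : SupportedOn O₁ X) (h2 : SupportedOn O₂ X) : SupportedOn (O₁ + O₂) X := by
  constructor
  · intro f g hfg
    show O₁ (basisVec f) g + O₂ (basisVec f) g = 0
    rw [h1.1 f g hfg, h2.1 f g hfg, add_zero]
  · intro f f' g g' a b c d
    show O₁ (basisVec f) g + O₂ (basisVec f) g = O₁ (basisVec f') g' + O₂ (basisVec f') g'
    rw [h1.2 f f' g g' a b c d, h2.2 f f' g g' a b c d]

lemma sOn_smul {O : Module.End ℂ (QState (Fin N))} {X : Set (Fin N)}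
    (c : ℂ) (h : SupportedOn O X) : SupportedOn (c • O) X := by
  constructor
  · intro f g hfg
    show c * O (basisVec f) g = 0
    rw [h.1 f g hfg, mul_zero]
  · intro f f' g g' a b cc d
    show c * O (basisVec f) g = c * O (basisVec f') g'
    rw [h.2 f f' g g' a b cc d]

lemma sOn_neg {O : Module.End ℂ (QState (Fin N))} {X : Set (Fin N)}
    (h : SupportedOn O X) : SupportedOn (-O) X := by
  rw [← neg_one_smul ℂ O]
  exact sOn_smul _ h

lemma sOn_sub {O₁ O₂ : Module.End ℂ (QState (Fin N))} {X : Set (Fin N)}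
    (h1 : SupportedOn O₁ X) (h2 : SupportedOn O₂ X) : SupportedOn (O₁ - O₂) X := by
  rw [sub_eq_add_neg]; exact sOn_add h1 (sOn_neg h2)

lemma sOn_sum {ι : Type*} (s : Finset ι) (F : ι → Module.End ℂ (QState (Fin N)))
    {X : Set (Fin N)} (h : ∀ a ∈ s, SupportedOn (F a) X) :
    SupportedOn (∑ a ∈ s, F a) X := by
  classical
  induction s using Finset.induction_on with
  | empty => simpa using sOn_zero X
  | insert _ _ hni ih =>
    rw [Finset.sum_insert hni]
    exact sOn_add (h _ (Finset.mem_insert_self _ _))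
      (ih fun a ha => h a (Finset.mem_insert_of_mem ha))

lemma sOn_mono {O : Module.End ℂ (QState (Fin N))} {X Y : Set (Fin N)}
    (h : SupportedOn O X) (hXY : X ⊆ Y) : SupportedOn O Y := by
  constructor
  · intro f g ⟨i, hi, hne⟩
    exact h.1 f g ⟨i, fun hx => hi (hXY hx), hne⟩
  · intro f f' g g' hff' hgg' hfg hf'g'
    by_cases hout : ∃ i, i ∉ X ∧ f i ≠ g i
    · obtain ⟨i, hiX, hine⟩ := hout
      have hiY : i ∈ Y := by
        by_contra hiY
        exact hine (hfg i hiY)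
      have hne' : f' i ≠ g' i := by
        rw [← hff' i hiY, ← hgg' i hiY]; exact hine
      rw [h.1 f g ⟨i, hiX, hine⟩, h.1 f' g' ⟨i, hiX, hne'⟩]
    · push_neg at hout
      refine h.2 f f' g g' (fun i hi => hff' i (hXY hi)) (fun i hi => hgg' i (hXY hi))
        (fun i hi => hout i hi) ?_
      intro i hi
      by_cases hiY : i ∈ Y
      · rw [← hff' i hiY, ← hgg' i hiY]; exact hout i hi
      · exact hf'g' i hiY

lemma eq_on_off_iff {X : Set (Fin N)} {f f' g g' : Fin N → Bool}
    (hff' : ∀ i ∈ X, f i = f' i) (hgg' : ∀ i ∈ X, g i = g' i)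
    (hfg : ∀ i ∉ X, f i = g i) (hf'g' : ∀ i ∉ X, f' i = g' i) :
    g = f ↔ g' = f' := by
  constructor
  · intro hgf
    funext i
    by_cases hi : i ∈ X
    · rw [← hgg' i hi, ← hff' i hi, hgf]
    · exact (hf'g' i hi).symm
  · intro hgf
    funext i
    by_cases hi : i ∈ X
    · rw [hgg' i hi, hff' i hi, hgf]
    · exact (hfg i hi).symm

lemma sOn_one (X : Set (Fin N)) :
    SupportedOn (1 : Module.End ℂ (QState (Fin N))) X := by
  constructor
  · intro f g ⟨i, _, hne⟩
    show basisVec f g = 0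
    rw [basisVec_apply, if_neg]
    intro hgf; exact hne (congrFun hgf i).symm
  · intro f f' g g' hff' hgg' hfg hf'g'
    show basisVec f g = basisVec f' g'
    rw [basisVec_apply, basisVec_apply]
    rw [if_congr (eq_on_off_iff hff' hgg' hfg hf'g') rfl rfl]

lemma sOn_n (i : Fin N) :
    SupportedOn (creOp i * annOp i) ({i} : Set (Fin N)) := by
  constructor
  · intro f g ⟨j, _, hne⟩
    rw [nOp_apply]
    have : basisVec f g = 0 := by
      rw [basisVec_apply, if_neg]
      intro hgf; exact hne (congrFun hgf j).symm
    show (if g i = true then basisVec f g else 0) = 0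
    rw [this, ite_self]
  · intro f f' g g' hff' hgg' hfg hf'g'
    rw [nOp_apply, nOp_apply]
    show (if g i = true then basisVec f g else 0)
        = (if g' i = true then basisVec f' g' else 0)
    rw [basisVec_apply, basisVec_apply,
      if_congr (eq_on_off_iff hff' hgg' hfg hf'g') rfl rfl,
      hgg' i rfl]

/-! ### Locally supported vectors -/

/-- `v` is a state vector supported on configurations that are false outside `B`. -/
def LocVec (B : Finset (Fin N)) (v : QState (Fin N)) : Prop :=
  ∀ g : Fin N → Bool, v g ≠ 0 → ∀ i : Fin N, i ∉ B → g i = false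

lemma locVec_zero (B : Finset (Fin N)) : LocVec B (0 : QState (Fin N)) :=
  fun _ h => absurd rfl h

lemma LocVec.mono {B B' : Finset (Fin N)} {v : QState (Fin N)}
    (h : LocVec B v) (hBB : B ⊆ B') : LocVec B' v :=
  fun g hg i hi => h g hg i fun hmem => hi (hBB hmem)

lemma LocVec.add {B : Finset (Fin N)} {v w : QState (Fin N)}
    (hv : LocVec B v) (hw : LocVec B w) : LocVec B (v + w) := by
  intro g hg i hi
  by_cases h : v g = 0
  · have : w g ≠ 0 := by
      intro h2; exact hg (by show v g + w g = 0; rw [h, h2, add_zero])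
    exact hw g this i hi
  · exact hv g h i hi

lemma LocVec.neg {B : Finset (Fin N)} {v : QState (Fin N)}
    (hv : LocVec B v) : LocVec B (-v) := by
  intro g hg i hi
  refine hv g (fun h => hg ?_) i hi
  show -(v g) = 0
  rw [h, neg_zero]

lemma LocVec.sub {B : Finset (Fin N)} {v w : QState (Fin N)}
    (hv : LocVec B v) (hw : LocVec B w) : LocVec B (v - w) := by
  rw [sub_eq_add_neg]; exact hv.add hw.neg

lemma locVec_sum {ι : Type*} (s : Finset ι) (F : ι → QState (Fin N))
    {B : Finset (Fin N)} (h : ∀ a ∈ s, LocVec B (F a)) :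
    LocVec B (∑ a ∈ s, F a) := by
  classical
  induction s using Finset.induction_on with
  | empty => simpa using locVec_zero B
  | insert _ _ hni ih =>
    rw [Finset.sum_insert hni]
    exact (h _ (Finset.mem_insert_self _ _)).add
      (ih fun a ha => h a (Finset.mem_insert_of_mem ha))

lemma LocVec.smul {B : Finset (Fin N)} {v : QState (Fin N)}
    (c : ℂ) (hv : LocVec B v) : LocVec B (c • v) := by
  intro g hg i hi
  refine hv g (fun h => hg ?_) i hi
  show c * v g = 0
  rw [h, mul_zero]

lemma locVec_basis_c0 (B : Finset (Fin N)) : LocVec B (basisVec c0) := by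
  intro g hg i _
  rw [basisVec_apply] at hg
  by_cases h : g = c0
  · rw [h]; rfl
  · exact absurd (if_neg h) hg

lemma LocVec.creOp {B : Finset (Fin N)} {v : QState (Fin N)} {i : Fin N}
    (hv : LocVec B v) (hi : i ∈ B) : LocVec B (creOp i v) := by
  intro g hg j hj
  rw [creOp_apply] at hg
  by_cases h : g i = true
  · rw [if_pos h] at hg
    have := hv _ hg j hj
    rwa [Function.update_apply, if_neg (fun hji : j = i => hj (hji ▸ hi))] at this
  · exact absurd (if_neg h) hg

/-! ### Action of a supported operator on the vacuum / single-excitation basis -/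

lemma op_vac_loc {O : Module.End ℂ (QState (Fin N))} {B : Finset (Fin N)}
    (hO : SupportedOn O ↑B) : LocVec B (O (basisVec c0)) := by
  intro g hg i hi
  by_contra h
  have h' : g i = true := by
    cases hgi : g i
    · exact absurd hgi h
    · rfl
  exact hg (hO.1 c0 g ⟨i, by simpa using hi, by rw [c0_apply, h']; exact fun h => by cases h⟩)

lemma op_dl_loc {O : Module.End ℂ (QState (Fin N))} {B : Finset (Fin N)} {i : Fin N}
    (hO : SupportedOn O ↑B) (hi : i ∈ B) : LocVec B (O (basisVec (dl i))) := by
  intro g hg j hj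
  by_contra h
  have h' : g j = true := by
    cases hgj : g j
    · exact absurd hgj h
    · rfl
  have hji : j ≠ i := fun hji => hj (hji ▸ hi)
  refine hg (hO.1 (dl i) g ⟨j, by simpa using hj, ?_⟩)
  rw [dl_ne hji, h']
  exact fun h => by cases h

lemma op_dl_far {O : Module.End ℂ (QState (Fin N))} {B : Finset (Fin N)} {i : Fin N}
    (hO : SupportedOn O ↑B) (hi : i ∉ B) :
    O (basisVec (dl i)) = creOp i (O (basisVec c0)) := by
  funext g
  rw [creOp_apply]
  by_cases hgi : g i = true
  · rw [if_pos hgi]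
    by_cases hout : ∃ j : Fin N, j ∉ B ∧ j ≠ i ∧ g j = true
    · obtain ⟨j, hjB, hji, hgj⟩ := hout
      have h1 : O (basisVec (dl i)) g = 0 := by
        refine hO.1 (dl i) g ⟨j, by simpa using hjB, ?_⟩
        rw [dl_ne hji, hgj]; exact fun h => by cases h
      have h2 : O (basisVec c0) (Function.update g i false) = 0 := by
        by_contra h2
        have := op_vac_loc hO _ h2 j hjB
        rw [Function.update_apply, if_neg hji] at this
        rw [this] at hgj; cases hgj
      rw [h1, h2]
    · push_neg at hout
      have hout' : ∀ j : Fin N, j ∉ B → j ≠ i → g j = false := fun j h1 h2 => by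
        cases hgj : g j
        · rfl
        · exact absurd hgj (hout j h1 h2)
      refine hO.2 (dl i) c0 g (Function.update g i false) ?_ ?_ ?_ ?_
      · intro m hm
        have : m ≠ i := fun h => hi (by rw [← h]; simpa using hm)
        rw [dl_ne this, c0_apply]
      · intro m hm
        have : m ≠ i := fun h => hi (by rw [← h]; simpa using hm)
        rw [Function.update_apply, if_neg this]
      · intro m hm
        rcases eq_or_ne m i with rfl | hne
        · rw [dl_self, hgi]
        · rw [dl_ne hne, hout' m (by simpa using hm) hne]
      · intro m hm
        rcases eq_or_ne m i with rfl | hne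
        · rw [Function.update_self, c0_apply]
        · rw [Function.update_apply, if_neg hne, c0_apply,
            hout' m (by simpa using hm) hne]
  · rw [if_neg hgi]
    refine hO.1 (dl i) g ⟨i, by simpa using hi, ?_⟩
    rw [dl_self]
    intro h
    exact hgi h.symm

/-! ### Gadget operators -/

/-- zero out a configuration outside `B` -/
def maskIn (B : Finset (Fin N)) (g : Fin N → Bool) : Fin N → Bool :=
  fun m => if m ∈ B then g m else false

/-- overwrite a configuration on `B` with `b` -/
def overB (B : Finset (Fin N)) (b g : Fin N → Bool) : Fin N → Bool :=
  fun m => if m ∈ B then b m else g m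

/-- the gadget operator: as a linear function of the payload `v`, the operator
`ψ ↦ (g ↦ v (maskIn B g) * ψ (overB B b g))`. -/
def gad (B : Finset (Fin N)) (b : Fin N → Bool) :
    QState (Fin N) →ₗ[ℂ] Module.End ℂ (QState (Fin N)) where
  toFun v :=
    { toFun := fun ψ => fun g => v (maskIn B g) * ψ (overB B b g)
      map_add' := fun ψ φ => by
        funext g
        show v (maskIn B g) * (ψ (overB B b g) + φ (overB B b g))
          = v (maskIn B g) * ψ (overB B b g) + v (maskIn B g) * φ (overB B b g)
        ring
      map_smul' := fun c ψ => by
        funext g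
        show v (maskIn B g) * (c * ψ (overB B b g)) = c * (v (maskIn B g) * ψ (overB B b g))
        ring }
  map_add' v w := by
    refine LinearMap.ext fun ψ => funext fun g => ?_
    show (v (maskIn B g) + w (maskIn B g)) * ψ (overB B b g)
      = v (maskIn B g) * ψ (overB B b g) + w (maskIn B g) * ψ (overB B b g)
    ring
  map_smul' c v := by
    refine LinearMap.ext fun ψ => funext fun g => ?_
    show (c * v (maskIn B g)) * ψ (overB B b g) = c * (v (maskIn B g) * ψ (overB B b g))
    ring

lemma gad_apply (B : Finset (Fin N)) (b : Fin N → Bool) (v ψ : QState (Fin N))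
    (g : Fin N → Bool) : gad B b v ψ g = v (maskIn B g) * ψ (overB B b g) := rfl

lemma gad_basis (B : Finset (Fin N)) (b : Fin N → Bool) (v : QState (Fin N))
    (f g : Fin N → Bool) :
    gad B b v (basisVec f) g = v (maskIn B g) * (if overB B b g = f then 1 else 0) := by
  rw [gad_apply, basisVec_apply]

lemma over_eq_iff (B : Finset (Fin N)) (b g f : Fin N → Bool)
    (hfg : ∀ i ∉ B, f i = g i) :
    overB B b g = f ↔ ∀ m ∈ B, b m = f m := by
  constructor
  · intro h m hm
    rw [← congrFun h m, overB, if_pos hm]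
  · intro h
    funext m
    by_cases hm : m ∈ B
    · rw [overB, if_pos hm, h m hm]
    · rw [overB, if_neg hm, hfg m hm]

lemma sOn_gad (B : Finset (Fin N)) (b : Fin N → Bool) (v : QState (Fin N)) :
    SupportedOn (gad B b v) ↑B := by
  constructor
  · intro f g ⟨i, hi, hne⟩
    rw [gad_basis, if_neg, mul_zero]
    intro h
    have := congrFun h i
    rw [overB, if_neg (by simpa using hi)] at this
    exact hne (this ▸ rfl)
  · intro f f' g g' hff' hgg' hfg hf'g'
    rw [gad_basis, gad_basis]
    have h1 : maskIn B g = maskIn B g' := by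
      funext m
      by_cases hm : m ∈ B
      · rw [maskIn, maskIn, if_pos hm, if_pos hm, hgg' m hm]
      · rw [maskIn, maskIn, if_neg hm, if_neg hm]
    have h2 : (overB B b g = f) ↔ (overB B b g' = f') := by
      rw [over_eq_iff B b g f (fun i hi => hfg i (by simpa using hi)),
        over_eq_iff B b g' f' (fun i hi => hf'g' i (by simpa using hi))]
      constructor
      · intro h m hm; rw [← hff' m hm]; exact h m hm
      · intro h m hm; rw [hff' m hm]; exact h m hm
    rw [h1, if_congr h2 rfl rfl]

/-- the `P`-type gadget: base configuration all-false. -/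
lemma gadP_vac {B : Finset (Fin N)} {v : QState (Fin N)} (hv : LocVec B v) :
    gad B c0 v (basisVec c0) = v := by
  funext g
  rw [gad_basis]
  by_cases h : ∀ m : Fin N, m ∉ B → g m = false
  · have hm : maskIn B g = g := by
      funext m
      by_cases hm : m ∈ B
      · rw [maskIn, if_pos hm]
      · rw [maskIn, if_neg hm, h m hm]
    have hov : overB B c0 g = c0 := by
      funext m
      by_cases hm : m ∈ B
      · rw [overB, if_pos hm]
      · rw [overB, if_neg hm, h m hm]; rfl
    rw [hm, hov, if_pos rfl, mul_one]
  · push_neg at h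
    obtain ⟨m, hm, hgm⟩ := h
    have hgm' : g m = true := eq_true_of_ne_false hgm
    have h1 : v g = 0 := by
      by_contra h1
      rw [hv g h1 m hm] at hgm'; cases hgm'
    rw [h1, if_neg, mul_zero]
    intro hc
    have := congrFun hc m
    rw [overB, if_neg hm, hgm'] at this
    cases this

lemma gadP_dl_mem {B : Finset (Fin N)} (v : QState (Fin N)) {i : Fin N} (hi : i ∈ B) :
    gad B c0 v (basisVec (dl i)) = 0 := by
  funext g
  have hne : overB B c0 g ≠ dl i := by
    intro h
    have := congrFun h i
    rw [overB, if_pos hi, c0_apply, dl_self] at this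
    cases this
  rw [gad_basis, if_neg hne, mul_zero]
  rfl

lemma gadP_dl_not_mem {B : Finset (Fin N)} {v : QState (Fin N)} (hv : LocVec B v)
    {i : Fin N} (hi : i ∉ B) :
    gad B c0 v (basisVec (dl i)) = creOp i v := by
  funext g
  rw [gad_basis, creOp_apply]
  by_cases hgi : g i = true
  · rw [if_pos hgi]
    by_cases h : ∀ m : Fin N, m ∉ B → m ≠ i → g m = false
    · have hov : overB B c0 g = dl i := by
        funext m
        by_cases hm : m ∈ B
        · rw [overB, if_pos hm, c0_apply, dl_ne (fun he : m = i => hi (he ▸ hm))]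
        · rcases eq_or_ne m i with rfl | hne
          · rw [overB, if_neg hm, hgi, dl_self]
          · rw [overB, if_neg hm, h m hm hne, dl_ne hne]
      have hmask : maskIn B g = Function.update g i false := by
        funext m
        by_cases hm : m ∈ B
        · rw [maskIn, if_pos hm, Function.update_apply,
            if_neg (fun he : m = i => hi (he ▸ hm))]
        · rcases eq_or_ne m i with rfl | hne
          · rw [maskIn, if_neg hm, Function.update_self]
          · rw [maskIn, if_neg hm, Function.update_apply, if_neg hne, h m hm hne]
      rw [hov, hmask, if_pos rfl, mul_one]
    · push_neg at h
      obtain ⟨m, hm, hne, hgm⟩ := h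
      have hgm' : g m = true := eq_true_of_ne_false hgm
      have h1 : v (Function.update g i false) = 0 := by
        by_contra h1
        have := hv _ h1 m hm
        rw [Function.update_apply, if_neg hne, hgm'] at this
        cases this
      rw [h1, if_neg, mul_zero]
      intro hc
      have := congrFun hc m
      rw [overB, if_neg hm, hgm', dl_ne hne] at this
      cases this
  · rw [if_neg hgi, if_neg, mul_zero]
    intro hc
    have := congrFun hc i
    rw [overB, if_neg hi, dl_self] at this
    exact hgi this

/-- the `Q`-type gadget: base configuration `dl j` with `j ∈ B`. -/
lemma gadQ_vac {B : Finset (Fin N)} (v : QState (Fin N)) {j : Fin N} (hj : j ∈ B) :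
    gad B (dl j) v (basisVec c0) = 0 := by
  funext g
  have hne : overB B (dl j) g ≠ c0 := by
    intro h
    have := congrFun h j
    rw [overB, if_pos hj, dl_self, c0_apply] at this
    cases this
  rw [gad_basis, if_neg hne, mul_zero]
  rfl

lemma gadQ_dl_self {B : Finset (Fin N)} {v : QState (Fin N)} (hv : LocVec B v)
    {j : Fin N} (hj : j ∈ B) :
    gad B (dl j) v (basisVec (dl j)) = v := by
  funext g
  rw [gad_basis]
  by_cases h : ∀ m : Fin N, m ∉ B → g m = false
  · have hov : overB B (dl j) g = dl j := by
      funext m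
      by_cases hm : m ∈ B
      · rw [overB, if_pos hm]
      · rw [overB, if_neg hm, h m hm, dl_ne (fun he : m = j => hm (he ▸ hj))]
    have hmask : maskIn B g = g := by
      funext m
      by_cases hm : m ∈ B
      · rw [maskIn, if_pos hm]
      · rw [maskIn, if_neg hm, h m hm]
    rw [hov, hmask, if_pos rfl, mul_one]
  · push_neg at h
    obtain ⟨m, hm, hgm⟩ := h
    have hgm' : g m = true := eq_true_of_ne_false hgm
    have h1 : v g = 0 := by
      by_contra h1
      rw [hv g h1 m hm] at hgm'; cases hgm'
    rw [h1, if_neg, mul_zero]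
    intro hc
    have := congrFun hc m
    rw [overB, if_neg hm, hgm', dl_ne (fun he : m = j => hm (he ▸ hj))] at this
    cases this

lemma gadQ_dl_ne {B : Finset (Fin N)} (v : QState (Fin N)) {j i : Fin N} (hj : j ∈ B)
    (hij : i ≠ j) :
    gad B (dl j) v (basisVec (dl i)) = 0 := by
  funext g
  have hne : overB B (dl j) g ≠ dl i := by
    intro h
    have := congrFun h j
    rw [overB, if_pos hj, dl_self, dl_ne (fun he : j = i => hij he.symm)] at this
    cases this
  rw [gad_basis, if_neg hne, mul_zero]
  rfl

/-! ### Applications to the W state -/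

lemma op_W {O : Module.End ℂ (QState (Fin N))} :
    O (WState (Fin N) 1) = ∑ i : Fin N, O (basisVec (dl i)) := by
  rw [WState_one, map_sum]

lemma op_W_split {O : Module.End ℂ (QState (Fin N))} {B : Finset (Fin N)}
    (hO : SupportedOn O ↑B) :
    O (WState (Fin N) 1) = (∑ i ∈ B, O (basisVec (dl i)))
      + ∑ i ∈ Bᶜ, creOp i (O (basisVec c0)) := by
  rw [op_W, ← Finset.sum_add_sum_compl B]
  congr 1
  refine Finset.sum_congr rfl fun i hi => ?_
  exact op_dl_far hO (by simpa using hi)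

lemma gadP_W {B : Finset (Fin N)} {v : QState (Fin N)} (hv : LocVec B v) :
    gad B c0 v (WState (Fin N) 1) = ∑ i ∈ Bᶜ, creOp i v := by
  rw [op_W, ← Finset.sum_add_sum_compl B]
  have h1 : ∑ i ∈ B, gad B c0 v (basisVec (dl i)) = 0 :=
    Finset.sum_eq_zero fun i hi => gadP_dl_mem v hi
  rw [h1, zero_add]
  refine Finset.sum_congr rfl fun i hi => ?_
  rw [gadP_dl_not_mem hv (by simpa using hi)]

lemma gadQ_W {B : Finset (Fin N)} {v : QState (Fin N)} (hv : LocVec B v)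
    {j : Fin N} (hj : j ∈ B) :
    gad B (dl j) v (WState (Fin N) 1) = v := by
  rw [op_W, Finset.sum_eq_single j]
  · exact gadQ_dl_self hv hj
  · intro i _ hij
    exact gadQ_dl_ne v hj hij
  · intro h; exact absurd (Finset.mem_univ j) h

/-! ### Windows on the chain, Abel summation, localization -/

/-- the window `[s, s+L)` as a set of sites -/
def win (L s : ℕ) : Finset (Fin N) :=
  Finset.univ.filter fun i => s ≤ (i : ℕ) ∧ (i : ℕ) < s + L

lemma mem_win {L s : ℕ} {i : Fin N} : i ∈ win L s ↔ s ≤ (i : ℕ) ∧ (i : ℕ) < s + L := by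
  simp [win]

lemma chainDist_eq (i j : Fin N) :
    chainDist i j = (((i : ℕ) : ℤ) - ((j : ℕ) : ℤ)).natAbs := rfl

lemma win_diam (L' s R' : ℕ) (h : L' ≤ R') : ChainDiamLE (win L' s : Finset (Fin N)) R' := by
  intro i hi j hj
  rw [mem_win] at hi hj
  rw [chainDist_eq]
  omega

lemma win_union {L : ℕ} (hL : 0 < L) (s : ℕ) :
    win L s ∪ win L (s+1) = (win (L+1) s : Finset (Fin N)) := by
  ext i
  rw [Finset.mem_union, mem_win, mem_win, mem_win]
  omega

lemma win_nonempty {L s : ℕ} (hL : 0 < L) (hs : s + L ≤ N) :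
    (win L s : Finset (Fin N)).Nonempty := by
  have hsN : s < N := by omega
  refine ⟨⟨s, hsN⟩, ?_⟩
  have hc : ((⟨s, hsN⟩ : Fin N) : ℕ) = s := rfl
  rw [mem_win, hc]
  omega

/-- a site of the chain, given by a natural number (clamped) -/
def site (hN : 0 < N) (n : ℕ) : Fin N := ⟨min n (N-1), by omega⟩

lemma site_coe (hN : 0 < N) {n : ℕ} (h : n ≤ N-1) : ((site hN n : Fin N) : ℕ) = n := by
  simp [site]; omega

lemma abel_sum {M : Type*} [AddCommGroup M] [Module ℂ M]
    (G : ℕ → QState (Fin N) →ₗ[ℂ] M) (a : ℕ → QState (Fin N)) (ha0 : a 0 = 0) (n : ℕ) :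
    ∑ t ∈ Finset.range (n+1), G t (a (t+1) - a t)
      = (∑ t ∈ Finset.range n, (G t (a (t+1)) - G (t+1) (a (t+1)))) + G n (a (n+1)) := by
  induction n with
  | zero => simp [ha0]
  | succ n ih =>
    rw [Finset.sum_range_succ, ih, Finset.sum_range_succ, map_sub (G (n+1))]
    abel

lemma loc_partial (SS L : ℕ) (p : ℕ → QState (Fin N))
    (hp : ∀ t, LocVec (win L t) (p t))
    (htot : ∑ t ∈ Finset.range (SS+1), p t = 0)
    {s : ℕ} (hs : s < SS) :
    LocVec (win L s ∩ win L (s+1)) (∑ t ∈ Finset.range (s+1), p t) := by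
  intro g hg i hi
  by_contra hgi
  have hgi' : g i = true := eq_true_of_ne_false hgi
  have hcase : (i : ℕ) ≤ s ∨ s + L ≤ (i : ℕ) := by
    by_contra hc
    push_neg at hc
    exact hi (Finset.mem_inter.2 ⟨mem_win.2 ⟨by omega, by omega⟩,
      mem_win.2 ⟨by omega, by omega⟩⟩)
  rcases hcase with hc | hc
  · have hzero : ∀ t, s < t → p t g = 0 := by
      intro t ht
      by_contra h0
      have := hp t g h0 i (fun hmem => by rw [mem_win] at hmem; omega)
      rw [this] at hgi'; cases hgi'
    have h1 : ∑ t ∈ Finset.range (s+1), p t g = ∑ t ∈ Finset.range (SS+1), p t g :=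
      Finset.sum_subset (Finset.range_subset_range.2 (by omega)) (fun t ht hts => hzero t (by
        rw [Finset.mem_range] at ht hts; omega))
    have h2 : (∑ t ∈ Finset.range (s+1), p t) g = (∑ t ∈ Finset.range (SS+1), p t) g := by
      rw [Finset.sum_apply, Finset.sum_apply]; exact h1
    rw [htot] at h2
    exact hg h2
  · refine hg ?_
    rw [Finset.sum_apply]
    refine Finset.sum_eq_zero fun t ht => ?_
    by_contra h0
    have := hp t g h0 i (fun hmem => by
      rw [mem_win] at hmem; rw [Finset.mem_range] at ht; omega)
    rw [this] at hgi'; cases hgi'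

/-! ### The decomposition machine -/

variable (hN : 0 < N)

def vv (κ : ℕ → Module.End ℂ (QState (Fin N))) (s : ℕ) : QState (Fin N) :=
  κ s (basisVec c0)

def uu (L : ℕ) (κ : ℕ → Module.End ℂ (QState (Fin N))) (s : ℕ) : QState (Fin N) :=
  ∑ i ∈ win L s, κ s (basisVec (dl i))

def Ab (κ : ℕ → Module.End ℂ (QState (Fin N))) (r : ℕ) : QState (Fin N) :=
  ∑ t ∈ Finset.range r, vv κ t

def pp (L : ℕ) (κ : ℕ → Module.End ℂ (QState (Fin N))) (t : ℕ) : QState (Fin N) :=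
  uu L κ t + creOp (site hN (t+L-1)) (Ab κ t) - creOp (site hN t) (Ab κ (t+1))

def Pb (L : ℕ) (κ : ℕ → Module.End ℂ (QState (Fin N))) (r : ℕ) : QState (Fin N) :=
  ∑ t ∈ Finset.range r, pp hN L κ t

def GQ (L s : ℕ) : QState (Fin N) →ₗ[ℂ] Module.End ℂ (QState (Fin N)) :=
  gad (win L s) (dl (site hN s))

def kap (L : ℕ) (κ : ℕ → Module.End ℂ (QState (Fin N))) (s : ℕ) :
    Module.End ℂ (QState (Fin N)) :=
  κ s - gad (win L s) c0 (vv κ s) - GQ hN L s (uu L κ s)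

def FF (L : ℕ) (κ : ℕ → Module.End ℂ (QState (Fin N))) (s : ℕ) :
    Module.End ℂ (QState (Fin N)) :=
  (gad (win L s) c0 (Ab κ (s+1)) - gad (win L (s+1)) c0 (Ab κ (s+1)))
    + GQ hN L s (creOp (site hN s) (Ab κ (s+1)))
    - GQ hN L (s+1) (creOp (site hN (s+L)) (Ab κ (s+1)))

def QQ2 (L : ℕ) (κ : ℕ → Module.End ℂ (QState (Fin N))) (s : ℕ) :
    Module.End ℂ (QState (Fin N)) :=
  GQ hN L s (Pb hN L κ (s+1)) - GQ hN L (s+1) (Pb hN L κ (s+1))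

section Machine

variable {L SS : ℕ} {κ : ℕ → Module.End ℂ (QState (Fin N))}
  {K : Module.End ℂ (QState (Fin N))}
  (hL : 0 < L) (hSS : N = SS + L)
  (hκsupp : ∀ s, SupportedOn (κ s) ↑(win L s : Finset (Fin N)))
  (hκvan : ∀ s, SS < s → κ s = 0)
  (hκsum : ∑ s ∈ Finset.range (SS+1), κ s = K)
  (hK0 : K (basisVec c0) = 0)

lemma site_mem_win {s n : ℕ} (h1 : s ≤ n) (h2 : n < s + L) (h3 : n ≤ N-1) :
    site hN n ∈ win L s := by
  rw [mem_win, site_coe hN h3]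
  omega

include hκsupp in
lemma vv_loc (s : ℕ) : LocVec (win L s) (vv κ s) := op_vac_loc (hκsupp s)

include hκsupp in
lemma uu_loc (s : ℕ) : LocVec (win L s) (uu L κ s) :=
  locVec_sum _ _ fun i hi => op_dl_loc (hκsupp s) hi

include hκvan in
lemma vv_van {s : ℕ} (h : SS < s) : vv κ s = 0 := by
  rw [vv, hκvan s h]
  rfl

include hκsum hK0 in
lemma Ab_tot : Ab κ (SS+1) = 0 := by
  rw [Ab]
  have : ∑ t ∈ Finset.range (SS+1), vv κ t
      = (∑ t ∈ Finset.range (SS+1), κ t) (basisVec c0) := by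
    rw [LinearMap.sum_apply]
    rfl
  rw [this, hκsum, hK0]

include hκvan hκsum hK0 in
lemma Ab_van {r : ℕ} (h : SS + 1 ≤ r) : Ab κ r = 0 := by
  rw [Ab]
  have h1 : ∑ t ∈ Finset.range (SS+1), vv κ t = ∑ t ∈ Finset.range r, vv κ t :=
    Finset.sum_subset (Finset.range_subset_range.2 h) (fun t ht hts =>
      vv_van hκvan (by rw [Finset.mem_range] at ht hts; omega))
  rw [← h1]
  exact Ab_tot hκsum hK0

include hκsupp hκsum hK0 in
lemma Ab_part {s : ℕ} (hs : s < SS) :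
    LocVec (win L s ∩ win L (s+1)) (Ab κ (s+1)) := by
  have := loc_partial SS L (vv κ) (vv_loc hκsupp) (by
    have := Ab_tot (κ := κ) hκsum hK0
    rwa [Ab] at this) hs
  rwa [Ab]

include hκsupp hκvan hκsum hK0 in
lemma Ab_loc1 {s : ℕ} (hs : s ≤ SS) : LocVec (win L s) (Ab κ s) := by
  rcases Nat.eq_zero_or_pos s with rfl | hpos
  · rw [Ab, Finset.range_zero, Finset.sum_empty]
    exact locVec_zero _
  · obtain ⟨r, rfl⟩ : ∃ r, s = r + 1 := ⟨s - 1, by omega⟩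
    exact (Ab_part hκsupp hκsum hK0 (by omega)).mono Finset.inter_subset_right

include hκsupp hκvan hκsum hK0 in
lemma Ab_loc2 {s : ℕ} (hs : s ≤ SS) : LocVec (win L s) (Ab κ (s+1)) := by
  rcases eq_or_lt_of_le hs with rfl | hlt
  · rw [Ab_van hκvan hκsum hK0 (le_refl _)]
    exact locVec_zero _
  · exact (Ab_part hκsupp hκsum hK0 hlt).mono Finset.inter_subset_left

end Machine

section Machine2

open Finset

variable {L SS : ℕ} {κ : ℕ → Module.End ℂ (QState (Fin N))}
  {K : Module.End ℂ (QState (Fin N))}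
  (hL : 0 < L) (hSS : N = SS + L)
  (hκsupp : ∀ s, SupportedOn (κ s) ↑(win L s : Finset (Fin N)))
  (hκvan : ∀ s, SS < s → κ s = 0)
  (hκsum : ∑ s ∈ Finset.range (SS+1), κ s = K)
  (hK0 : K (basisVec c0) = 0)
  (hKW : K (WState (Fin N) 1) = 0)

include hL hSS in
lemma site_self_mem {s : ℕ} (hs : s ≤ SS) : site hN s ∈ win L s :=
  site_mem_win hN (le_refl s) (by omega) (by omega)

include hL hSS in
lemma site_hi_mem {s : ℕ} (hs : s + 1 ≤ SS) : site hN (s+L) ∈ win L (s+1) :=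
  site_mem_win hN (by omega) (by omega) (by omega)

include hκsupp in
lemma kap_supp (s : ℕ) : SupportedOn (kap hN L κ s) ↑(win L s : Finset (Fin N)) :=
  sOn_sub (sOn_sub (hκsupp s) (sOn_gad _ _ _)) (sOn_gad _ _ _)

include hL hSS hκsupp in
lemma kap_vac {s : ℕ} (hs : s ≤ SS) : kap hN L κ s (basisVec c0) = 0 := by
  rw [kap, LinearMap.sub_apply, LinearMap.sub_apply,
    gadP_vac (vv_loc hκsupp s)]
  have hq : GQ hN L s (uu L κ s) (basisVec c0) = 0 := by
    rw [GQ, gadQ_vac (uu L κ s) (site_self_mem hN hL hSS hs)]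
  rw [hq]
  have h2 : κ s (basisVec c0) = vv κ s := rfl
  rw [h2]
  abel

include hL hSS hκsupp in
lemma kap_W {s : ℕ} (hs : s ≤ SS) : kap hN L κ s (WState (Fin N) 1) = 0 := by
  rw [kap, LinearMap.sub_apply, LinearMap.sub_apply,
    op_W_split (hκsupp s), gadP_W (vv_loc hκsupp s)]
  have hq : GQ hN L s (uu L κ s) (WState (Fin N) 1) = uu L κ s := by
    rw [GQ, gadQ_W (uu_loc hκsupp s) (site_self_mem hN hL hSS hs)]
  rw [hq]
  have h1 : ∑ i ∈ win L s, κ s (basisVec (dl i)) = uu L κ s := rfl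
  have h2 : κ s (basisVec c0) = vv κ s := rfl
  rw [h2, h1]
  abel

include hL in
lemma FF_supp (s : ℕ) (κ' : ℕ → Module.End ℂ (QState (Fin N))) :
    SupportedOn (FF hN L κ' s) ↑(win (L+1) s : Finset (Fin N)) := by
  have hsub1 : (win L s : Finset (Fin N)) ⊆ win (L+1) s := by
    rw [← win_union hL s]; exact Finset.subset_union_left
  have hsub2 : (win L (s+1) : Finset (Fin N)) ⊆ win (L+1) s := by
    rw [← win_union hL s]; exact Finset.subset_union_right
  have m1 : ∀ v, SupportedOn (gad (win L s) c0 v) ↑(win (L+1) s : Finset (Fin N)) :=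
    fun v => sOn_mono (sOn_gad _ _ _) (by exact Finset.coe_subset.2 hsub1)
  have m2 : ∀ v, SupportedOn (gad (win L (s+1)) c0 v) ↑(win (L+1) s : Finset (Fin N)) :=
    fun v => sOn_mono (sOn_gad _ _ _) (by exact Finset.coe_subset.2 hsub2)
  have m3 : ∀ v, SupportedOn (GQ hN L s v) ↑(win (L+1) s : Finset (Fin N)) :=
    fun v => sOn_mono (sOn_gad _ _ _) (by exact Finset.coe_subset.2 hsub1)
  have m4 : ∀ v, SupportedOn (GQ hN L (s+1) v) ↑(win (L+1) s : Finset (Fin N)) :=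
    fun v => sOn_mono (sOn_gad _ _ _) (by exact Finset.coe_subset.2 hsub2)
  exact sOn_sub (sOn_add (sOn_sub (m1 _) (m2 _)) (m3 _)) (m4 _)

include hL in
lemma QQ2_supp (s : ℕ) (κ' : ℕ → Module.End ℂ (QState (Fin N))) :
    SupportedOn (QQ2 hN L κ' s) ↑(win (L+1) s : Finset (Fin N)) := by
  have hsub1 : (win L s : Finset (Fin N)) ⊆ win (L+1) s := by
    rw [← win_union hL s]; exact Finset.subset_union_left
  have hsub2 : (win L (s+1) : Finset (Fin N)) ⊆ win (L+1) s := by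
    rw [← win_union hL s]; exact Finset.subset_union_right
  exact sOn_sub (sOn_mono (sOn_gad _ _ _) (Finset.coe_subset.2 hsub1))
    (sOn_mono (sOn_gad _ _ _) (Finset.coe_subset.2 hsub2))

include hL hSS hκsupp hκvan hκsum hK0 in
lemma FF_vac {s : ℕ} (hs : s < SS) : FF hN L κ s (basisVec c0) = 0 := by
  rw [FF, LinearMap.sub_apply, LinearMap.add_apply, LinearMap.sub_apply,
    gadP_vac (Ab_loc2 hκsupp hκvan hκsum hK0 hs.le),
    gadP_vac ((Ab_part hκsupp hκsum hK0 hs).mono Finset.inter_subset_right)]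
  have hq1 : GQ hN L s (creOp (site hN s) (Ab κ (s+1))) (basisVec c0) = 0 := by
    rw [GQ, gadQ_vac _ (site_self_mem hN hL hSS hs.le)]
  have hq2 : GQ hN L (s+1) (creOp (site hN (s+L)) (Ab κ (s+1))) (basisVec c0) = 0 := by
    rw [GQ, gadQ_vac _ (site_self_mem hN hL hSS hs)]
  rw [hq1, hq2]
  abel

include hL hSS hκsupp hκvan hκsum hK0 in
lemma FF_W {s : ℕ} (hs : s < SS) : FF hN L κ s (WState (Fin N) 1) = 0 := by
  have hA1 : LocVec (win L s) (Ab κ (s+1)) := Ab_loc2 hκsupp hκvan hκsum hK0 hs.le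
  have hA2 : LocVec (win L (s+1)) (Ab κ (s+1)) :=
    (Ab_part hκsupp hκsum hK0 hs).mono Finset.inter_subset_right
  rw [FF, LinearMap.sub_apply, LinearMap.add_apply, LinearMap.sub_apply,
    gadP_W hA1, gadP_W hA2]
  have hq1 : GQ hN L s (creOp (site hN s) (Ab κ (s+1))) (WState (Fin N) 1)
      = creOp (site hN s) (Ab κ (s+1)) := by
    rw [GQ, gadQ_W (hA1.creOp (site_self_mem hN hL hSS hs.le)) (site_self_mem hN hL hSS hs.le)]
  have hq2 : GQ hN L (s+1) (creOp (site hN (s+L)) (Ab κ (s+1))) (WState (Fin N) 1)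
      = creOp (site hN (s+L)) (Ab κ (s+1)) := by
    rw [GQ, gadQ_W (hA2.creOp (site_hi_mem hN hL hSS hs)) (site_self_mem hN hL hSS hs)]
  rw [hq1, hq2]
  -- combinatorial part
  have hD1 : win L s = insert (site hN s) (win L s ∩ win L (s+1)) := by
    have hc : ((site hN s : Fin N) : ℕ) = s := site_coe hN (by omega)
    ext i
    simp only [Finset.mem_insert, Finset.mem_inter, mem_win, Fin.ext_iff, hc]
    omega
  have hD2 : win L (s+1) = insert (site hN (s+L)) (win L s ∩ win L (s+1)) := by
    have hc : ((site hN (s+L) : Fin N) : ℕ) = s + L := site_coe hN (by omega)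
    ext i
    simp only [Finset.mem_insert, Finset.mem_inter, mem_win, Fin.ext_iff, hc]
    omega
  have hx1 : site hN s ∉ win L s ∩ win L (s+1) := by
    have hc : ((site hN s : Fin N) : ℕ) = s := site_coe hN (by omega)
    rw [Finset.mem_inter, mem_win, mem_win, hc]
    omega
  have hx2 : site hN (s+L) ∉ win L s ∩ win L (s+1) := by
    have hc : ((site hN (s+L) : Fin N) : ℕ) = s + L := site_coe hN (by omega)
    rw [Finset.mem_inter, mem_win, mem_win, hc]
    omega
  have hcompl : ∀ C : Finset (Fin N),
      ∑ i ∈ Cᶜ, creOp i (Ab κ (s+1)) = (∑ i : Fin N, creOp i (Ab κ (s+1)))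
        - ∑ i ∈ C, creOp i (Ab κ (s+1)) := by
    intro C
    rw [eq_sub_iff_add_eq, add_comm, Finset.sum_add_sum_compl]
  have hs1 : ∑ i ∈ win L s, creOp i (Ab κ (s+1))
      = creOp (site hN s) (Ab κ (s+1))
        + ∑ i ∈ win L s ∩ win L (s+1), creOp i (Ab κ (s+1)) := by
    conv_lhs => rw [hD1]
    rw [Finset.sum_insert hx1]
  have hs2 : ∑ i ∈ win L (s+1), creOp i (Ab κ (s+1))
      = creOp (site hN (s+L)) (Ab κ (s+1))
        + ∑ i ∈ win L s ∩ win L (s+1), creOp i (Ab κ (s+1)) := by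
    conv_lhs => rw [hD2]
    rw [Finset.sum_insert hx2]
  rw [hcompl (win L s), hcompl (win L (s+1)), hs1, hs2]
  abel

include hL hSS hκsupp hκvan hκsum hK0 in
lemma pp_loc (t : ℕ) : LocVec (win L t) (pp hN L κ t) := by
  rw [pp]
  have h1 : LocVec (win L t) (uu L κ t) := uu_loc hκsupp t
  have h2 : LocVec (win L t) (creOp (site hN (t+L-1)) (Ab κ t)) := by
    rcases Nat.eq_zero_or_pos t with rfl | hpos
    · rw [Ab, Finset.range_zero, Finset.sum_empty, map_zero]
      exact locVec_zero _
    · rcases le_or_gt t SS with hts | hts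
      · exact (Ab_loc1 hκsupp hκvan hκsum hK0 hts).creOp
          (site_mem_win hN (by omega) (by omega) (by omega))
      · rw [Ab_van hκvan hκsum hK0 (by omega), map_zero]
        exact locVec_zero _
  have h3 : LocVec (win L t) (creOp (site hN t) (Ab κ (t+1))) := by
    rcases lt_or_ge t SS with hts | hts
    · exact (Ab_loc2 hκsupp hκvan hκsum hK0 hts.le).creOp
        (site_mem_win hN (by omega) (by omega) (by omega))
    · rw [Ab_van hκvan hκsum hK0 (by omega), map_zero]
      exact locVec_zero _
  exact (h1.add h2).sub h3

lemma QQ2_vac {s : ℕ} (hs : s < SS) (hL : 0 < L) (hSS : N = SS + L) :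
    QQ2 hN L κ s (basisVec c0) = 0 := by
  rw [QQ2, LinearMap.sub_apply]
  have hq1 : GQ hN L s (Pb hN L κ (s+1)) (basisVec c0) = 0 := by
    rw [GQ, gadQ_vac _ (site_self_mem hN hL hSS hs.le)]
  have hq2 : GQ hN L (s+1) (Pb hN L κ (s+1)) (basisVec c0) = 0 := by
    rw [GQ, gadQ_vac _ (site_self_mem hN hL hSS hs)]
  rw [hq1, hq2, sub_self]

include hL hSS hκsupp hκvan hκsum hK0 in
lemma QQ2_W (hptot : ∑ t ∈ Finset.range (SS+1), pp hN L κ t = 0)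
    {s : ℕ} (hs : s < SS) : QQ2 hN L κ s (WState (Fin N) 1) = 0 := by
  have hloc : LocVec (win L s ∩ win L (s+1)) (Pb hN L κ (s+1)) := by
    rw [Pb]
    exact loc_partial SS L _ (pp_loc hN hL hSS hκsupp hκvan hκsum hK0) hptot hs
  rw [QQ2, LinearMap.sub_apply]
  have hq1 : GQ hN L s (Pb hN L κ (s+1)) (WState (Fin N) 1) = Pb hN L κ (s+1) := by
    rw [GQ, gadQ_W (hloc.mono Finset.inter_subset_left) (site_self_mem hN hL hSS hs.le)]
  have hq2 : GQ hN L (s+1) (Pb hN L κ (s+1)) (WState (Fin N) 1) = Pb hN L κ (s+1) := by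
    rw [GQ, gadQ_W (hloc.mono Finset.inter_subset_right) (site_self_mem hN hL hSS hs)]
  rw [hq1, hq2, sub_self]

end Machine2

section Machine3

open Finset

variable {L SS : ℕ} {κ : ℕ → Module.End ℂ (QState (Fin N))}
  {K : Module.End ℂ (QState (Fin N))}
  (hL : 0 < L) (hSS : N = SS + L)
  (hκsupp : ∀ s, SupportedOn (κ s) ↑(win L s : Finset (Fin N)))
  (hκvan : ∀ s, SS < s → κ s = 0)
  (hκsum : ∑ s ∈ Finset.range (SS+1), κ s = K)
  (hK0 : K (basisVec c0) = 0)
  (hKW : K (WState (Fin N) 1) = 0)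

include hκvan hκsum hK0 in
lemma identityA :
    ∑ s ∈ Finset.range (SS+1), kap hN L κ s + ∑ s ∈ Finset.range SS, FF hN L κ s
      = K - ∑ t ∈ Finset.range (SS+1), GQ hN L t (pp hN L κ t) := by
  have hA0 : Ab κ 0 = 0 := by rw [Ab, Finset.range_zero, Finset.sum_empty]
  -- telescoping for the P-part
  have h1 : ∑ s ∈ Finset.range (SS+1), gad (win L s) c0 (vv κ s)
      = ∑ s ∈ Finset.range SS,
          (gad (win L s) c0 (Ab κ (s+1)) - gad (win L (s+1)) c0 (Ab κ (s+1))) := by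
    have h1a : ∀ s : ℕ, gad (win L s) c0 (vv κ s)
        = gad (win L s) c0 (Ab κ (s+1) - Ab κ s) := fun s => by
      have : Ab κ (s+1) - Ab κ s = vv κ s := by
        rw [Ab, Ab, Finset.sum_range_succ]; abel
      rw [this]
    calc ∑ s ∈ Finset.range (SS+1), gad (win L s) c0 (vv κ s)
        = ∑ s ∈ Finset.range (SS+1), gad (win L s) c0 (Ab κ (s+1) - Ab κ s) :=
          Finset.sum_congr rfl fun s _ => h1a s
      _ = ∑ s ∈ Finset.range SS,
            (gad (win L s) c0 (Ab κ (s+1)) - gad (win L (s+1)) c0 (Ab κ (s+1)))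
            + gad (win L SS) c0 (Ab κ (SS+1)) :=
          abel_sum (fun s => gad (win L s) c0) (Ab κ) hA0 SS
      _ = ∑ s ∈ Finset.range SS,
            (gad (win L s) c0 (Ab κ (s+1)) - gad (win L (s+1)) c0 (Ab κ (s+1))) := by
          rw [Ab_tot hκsum hK0, map_zero, add_zero]
  -- regrouping the Q-part
  have h2 : ∑ t ∈ Finset.range (SS+1), GQ hN L t (pp hN L κ t)
      = ∑ t ∈ Finset.range (SS+1), GQ hN L t (uu L κ t)
        - ∑ s ∈ Finset.range SS,
            (GQ hN L s (creOp (site hN s) (Ab κ (s+1)))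
              - GQ hN L (s+1) (creOp (site hN (s+L)) (Ab κ (s+1)))) := by
    have e1 : ∀ t : ℕ, GQ hN L t (pp hN L κ t)
        = GQ hN L t (uu L κ t) + GQ hN L t (creOp (site hN (t+L-1)) (Ab κ t))
          - GQ hN L t (creOp (site hN t) (Ab κ (t+1))) := fun t => by
      rw [pp, map_sub, map_add]
    have e2 : ∑ t ∈ Finset.range (SS+1), GQ hN L t (creOp (site hN (t+L-1)) (Ab κ t))
        = ∑ t ∈ Finset.range SS, GQ hN L (t+1) (creOp (site hN (t+L)) (Ab κ (t+1))) := by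
      rw [Finset.sum_range_succ']
      have hz : GQ hN L 0 (creOp (site hN (0+L-1)) (Ab κ 0)) = 0 := by
        rw [hA0, map_zero, map_zero]
      rw [hz, add_zero]
      refine Finset.sum_congr rfl fun t _ => ?_
      have he : t + 1 + L - 1 = t + L := by omega
      rw [he]
    have e3 : ∑ t ∈ Finset.range (SS+1), GQ hN L t (creOp (site hN t) (Ab κ (t+1)))
        = ∑ t ∈ Finset.range SS, GQ hN L t (creOp (site hN t) (Ab κ (t+1))) := by
      rw [Finset.sum_range_succ, Ab_van hκvan hκsum hK0 (le_refl _), map_zero,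
        map_zero, add_zero]
    calc ∑ t ∈ Finset.range (SS+1), GQ hN L t (pp hN L κ t)
        = ∑ t ∈ Finset.range (SS+1),
            (GQ hN L t (uu L κ t) + GQ hN L t (creOp (site hN (t+L-1)) (Ab κ t))
              - GQ hN L t (creOp (site hN t) (Ab κ (t+1)))) :=
          Finset.sum_congr rfl fun t _ => e1 t
      _ = ∑ t ∈ Finset.range (SS+1), GQ hN L t (uu L κ t)
            + ∑ t ∈ Finset.range (SS+1), GQ hN L t (creOp (site hN (t+L-1)) (Ab κ t))
            - ∑ t ∈ Finset.range (SS+1), GQ hN L t (creOp (site hN t) (Ab κ (t+1))) := by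
          rw [Finset.sum_sub_distrib, Finset.sum_add_distrib]
      _ = ∑ t ∈ Finset.range (SS+1), GQ hN L t (uu L κ t)
            + ∑ t ∈ Finset.range SS, GQ hN L (t+1) (creOp (site hN (t+L)) (Ab κ (t+1)))
            - ∑ t ∈ Finset.range SS, GQ hN L t (creOp (site hN t) (Ab κ (t+1))) := by
          rw [e2, e3]
      _ = ∑ t ∈ Finset.range (SS+1), GQ hN L t (uu L κ t)
            - ∑ s ∈ Finset.range SS,
              (GQ hN L s (creOp (site hN s) (Ab κ (s+1)))
                - GQ hN L (s+1) (creOp (site hN (s+L)) (Ab κ (s+1)))) := by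
          rw [Finset.sum_sub_distrib]
          abel
  -- sum of the corrected window terms
  have h3 : ∑ s ∈ Finset.range (SS+1), kap hN L κ s
      = K - ∑ s ∈ Finset.range (SS+1), gad (win L s) c0 (vv κ s)
        - ∑ s ∈ Finset.range (SS+1), GQ hN L s (uu L κ s) := by
    calc ∑ s ∈ Finset.range (SS+1), kap hN L κ s
        = ∑ s ∈ Finset.range (SS+1),
            (κ s - gad (win L s) c0 (vv κ s) - GQ hN L s (uu L κ s)) := rfl
      _ = _ := by
          rw [Finset.sum_sub_distrib, Finset.sum_sub_distrib, hκsum]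
  have h4 : ∑ s ∈ Finset.range SS, FF hN L κ s
      = ∑ s ∈ Finset.range SS,
          (gad (win L s) c0 (Ab κ (s+1)) - gad (win L (s+1)) c0 (Ab κ (s+1)))
        + ∑ s ∈ Finset.range SS,
            (GQ hN L s (creOp (site hN s) (Ab κ (s+1)))
              - GQ hN L (s+1) (creOp (site hN (s+L)) (Ab κ (s+1)))) := by
    calc ∑ s ∈ Finset.range SS, FF hN L κ s
        = ∑ s ∈ Finset.range SS,
            ((gad (win L s) c0 (Ab κ (s+1)) - gad (win L (s+1)) c0 (Ab κ (s+1)))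
              + (GQ hN L s (creOp (site hN s) (Ab κ (s+1)))
                - GQ hN L (s+1) (creOp (site hN (s+L)) (Ab κ (s+1))))) := by
          refine Finset.sum_congr rfl fun s _ => ?_
          rw [FF]
          abel
      _ = _ := Finset.sum_add_distrib
  rw [h3, h4, h1, h2]
  abel

include hL hSS hκsupp hκvan hκsum hK0 hKW in
lemma pp_tot : ∑ t ∈ Finset.range (SS+1), pp hN L κ t = 0 := by
  have hid := identityA hN (κ := κ) (SS := SS) (L := L) hκvan hκsum hK0
  have happ := congrArg
    (fun T : Module.End ℂ (QState (Fin N)) => T (WState (Fin N) 1)) hid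
  simp only [LinearMap.add_apply, LinearMap.sub_apply, LinearMap.sum_apply] at happ
  have hz1 : ∑ s ∈ Finset.range (SS+1), kap hN L κ s (WState (Fin N) 1) = 0 :=
    Finset.sum_eq_zero fun s hs =>
      kap_W hN hL hSS hκsupp (by rw [Finset.mem_range] at hs; omega)
  have hz2 : ∑ s ∈ Finset.range SS, FF hN L κ s (WState (Fin N) 1) = 0 :=
    Finset.sum_eq_zero fun s hs =>
      FF_W hN hL hSS hκsupp hκvan hκsum hK0 (by rw [Finset.mem_range] at hs; omega)
  have hz3 : ∑ t ∈ Finset.range (SS+1), GQ hN L t (pp hN L κ t) (WState (Fin N) 1)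
      = ∑ t ∈ Finset.range (SS+1), pp hN L κ t :=
    Finset.sum_congr rfl fun t ht => by
      rw [GQ, gadQ_W (pp_loc hN hL hSS hκsupp hκvan hκsum hK0 t)
        (site_self_mem hN hL hSS (by rw [Finset.mem_range] at ht; omega))]
  rw [hz1, hz2, hKW, hz3] at happ
  have := happ.symm
  rwa [add_zero, zero_sub, neg_eq_zero] at this

include hL hSS hκsupp hκvan hκsum hK0 hKW in
lemma identityB :
    K = ∑ s ∈ Finset.range (SS+1), kap hN L κ s + ∑ s ∈ Finset.range SS, FF hN L κ s
        + ∑ s ∈ Finset.range SS, QQ2 hN L κ s := by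
  have hptot := pp_tot hN hL hSS hκsupp hκvan hκsum hK0 hKW
  have hPb0 : Pb hN L κ 0 = 0 := by rw [Pb, Finset.range_zero, Finset.sum_empty]
  have hPbtot : Pb hN L κ (SS+1) = 0 := by rw [Pb]; exact hptot
  have h5 : ∑ t ∈ Finset.range (SS+1), GQ hN L t (pp hN L κ t)
      = ∑ s ∈ Finset.range SS, QQ2 hN L κ s := by
    have h5a : ∀ t : ℕ, GQ hN L t (pp hN L κ t)
        = GQ hN L t (Pb hN L κ (t+1) - Pb hN L κ t) := fun t => by
      have : Pb hN L κ (t+1) - Pb hN L κ t = pp hN L κ t := by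
        rw [Pb, Pb, Finset.sum_range_succ]; abel
      rw [this]
    calc ∑ t ∈ Finset.range (SS+1), GQ hN L t (pp hN L κ t)
        = ∑ t ∈ Finset.range (SS+1), GQ hN L t (Pb hN L κ (t+1) - Pb hN L κ t) :=
          Finset.sum_congr rfl fun t _ => h5a t
      _ = ∑ s ∈ Finset.range SS,
            (GQ hN L s (Pb hN L κ (s+1)) - GQ hN L (s+1) (Pb hN L κ (s+1)))
            + GQ hN L SS (Pb hN L κ (SS+1)) :=
          abel_sum (fun s => GQ hN L s) (Pb hN L κ) hPb0 SS
      _ = ∑ s ∈ Finset.range SS, QQ2 hN L κ s := by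
          rw [hPbtot, map_zero, add_zero]
          rfl
  have hid := identityA hN (κ := κ) (SS := SS) (L := L) hκvan hκsum hK0
  rw [h5] at hid
  rw [eq_sub_iff_add_eq] at hid
  rw [← hid]

end Machine3

section Machine4

open Finset

lemma decompose_K {L SS : ℕ} {κ : ℕ → Module.End ℂ (QState (Fin N))}
    {K : Module.End ℂ (QState (Fin N))}
    (hL : 0 < L) (hSS : N = SS + L)
    (hκsupp : ∀ s, SupportedOn (κ s) ↑(win L s : Finset (Fin N)))
    (hκvan : ∀ s, SS < s → κ s = 0)
    (hκsum : ∑ s ∈ Finset.range (SS+1), κ s = K)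
    (hK0 : K (basisVec c0) = 0)
    (hKW : K (WState (Fin N) 1) = 0) :
    ∃ h : Finset (Fin N) → Module.End ℂ (QState (Fin N)),
      (∀ X, SupportedOn (h X) ↑X) ∧
      (∀ X, h X ≠ 0 → X.Nonempty ∧ ChainDiamLE X (L+1)) ∧
      (∀ X, h X (WState (Fin N) 1) = 0 ∧ h X (basisVec c0) = 0) ∧
      ∑ X : Finset (Fin N), h X = K := by
  classical
  have hN : 0 < N := by omega
  have hptot := pp_tot hN hL hSS hκsupp hκvan hκsum hK0 hKW
  refine ⟨fun X =>
    (∑ s ∈ (Finset.range (SS+1)).filter (fun s => win L s = X), kap hN L κ s)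
    + (∑ s ∈ (Finset.range SS).filter (fun s => win (L+1) s = X),
        (FF hN L κ s + QQ2 hN L κ s)), ?_, ?_, ?_, ?_⟩
  · -- supported
    intro X
    dsimp only
    refine sOn_add (sOn_sum _ _ fun s hs => ?_) (sOn_sum _ _ fun s hs => ?_)
    · rw [Finset.mem_filter] at hs
      rw [← hs.2]
      exact kap_supp hN hκsupp s
    · rw [Finset.mem_filter] at hs
      rw [← hs.2]
      exact sOn_add (FF_supp hN hL s κ) (QQ2_supp hN hL s κ)
  · -- nonempty and diameter
    intro X hX
    dsimp only at hX
    by_cases h1 : ∃ s ∈ Finset.range (SS+1), win L s = X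
    · obtain ⟨s, hs, rfl⟩ := h1
      rw [Finset.mem_range] at hs
      refine ⟨win_nonempty hL (by omega), ?_⟩
      exact win_diam L s (L+1) (by omega)
    · by_cases h2 : ∃ s ∈ Finset.range SS, win (L+1) s = X
      · obtain ⟨s, hs, rfl⟩ := h2
        rw [Finset.mem_range] at hs
        refine ⟨win_nonempty (by omega) (by omega), ?_⟩
        exact win_diam (L+1) s (L+1) (le_refl _)
      · exfalso
        push_neg at h1 h2
        apply hX
        have e1 : (Finset.range (SS+1)).filter (fun s => win L s = X) = ∅ :=
          Finset.filter_eq_empty_iff.2 (fun {s} hs => h1 s hs)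
        have e2 : (Finset.range SS).filter (fun s => win (L+1) s = X) = ∅ :=
          Finset.filter_eq_empty_iff.2 (fun {s} hs => h2 s hs)
        rw [e1, e2, Finset.sum_empty, Finset.sum_empty, add_zero]
  · -- annihilates W and vacuum
    intro X
    dsimp only
    constructor
    · rw [LinearMap.add_apply, LinearMap.sum_apply, LinearMap.sum_apply]
      have z1 : ∀ s ∈ (Finset.range (SS+1)).filter (fun s => win L s = X),
          kap hN L κ s (WState (Fin N) 1) = 0 := fun s hs => by
        rw [Finset.mem_filter, Finset.mem_range] at hs
        exact kap_W hN hL hSS hκsupp (by omega)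
      have z2 : ∀ s ∈ (Finset.range SS).filter (fun s => win (L+1) s = X),
          (FF hN L κ s + QQ2 hN L κ s) (WState (Fin N) 1) = 0 := fun s hs => by
        rw [Finset.mem_filter, Finset.mem_range] at hs
        rw [LinearMap.add_apply, FF_W hN hL hSS hκsupp hκvan hκsum hK0 hs.1,
          QQ2_W hN hL hSS hκsupp hκvan hκsum hK0 hptot hs.1, add_zero]
      rw [Finset.sum_eq_zero z1, Finset.sum_eq_zero z2, add_zero]
    · rw [LinearMap.add_apply, LinearMap.sum_apply, LinearMap.sum_apply]
      have z1 : ∀ s ∈ (Finset.range (SS+1)).filter (fun s => win L s = X),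
          kap hN L κ s (basisVec c0) = 0 := fun s hs => by
        rw [Finset.mem_filter, Finset.mem_range] at hs
        exact kap_vac hN hL hSS hκsupp (by omega)
      have z2 : ∀ s ∈ (Finset.range SS).filter (fun s => win (L+1) s = X),
          (FF hN L κ s + QQ2 hN L κ s) (basisVec c0) = 0 := fun s hs => by
        rw [Finset.mem_filter, Finset.mem_range] at hs
        rw [LinearMap.add_apply, FF_vac hN hL hSS hκsupp hκvan hκsum hK0 hs.1,
          QQ2_vac hN hs.1 hL hSS, add_zero]
      rw [Finset.sum_eq_zero z1, Finset.sum_eq_zero z2, add_zero]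
  · -- the sum is K
    dsimp only
    rw [Finset.sum_add_distrib]
    have e1 : ∑ X : Finset (Fin N),
        ∑ s ∈ (Finset.range (SS+1)).filter (fun s => win L s = X), kap hN L κ s
        = ∑ s ∈ Finset.range (SS+1), kap hN L κ s :=
      Finset.sum_fiberwise_of_maps_to (fun s _ => Finset.mem_univ _) _
    have e2 : ∑ X : Finset (Fin N),
        ∑ s ∈ (Finset.range SS).filter (fun s => win (L+1) s = X),
          (FF hN L κ s + QQ2 hN L κ s)
        = ∑ s ∈ Finset.range SS, (FF hN L κ s + QQ2 hN L κ s) :=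
      Finset.sum_fiberwise_of_maps_to (fun s _ => Finset.mem_univ _) _
    rw [e1, e2, Finset.sum_add_distrib, ← add_assoc]
    exact (identityB hN hL hSS hκsupp hκvan hκsum hK0 hKW).symm

end Machine4

/-! ### Step A : the vacuum is an eigenvector of any parent Hamiltonian of W -/

section StepA

open Finset

variable {R : ℕ} {H : Module.End ℂ (QState (Fin N))}
  {hd : Finset (Fin N) → Module.End ℂ (QState (Fin N))} {lam : ℂ}

lemma dl_true_imp {i m : Fin N} (h : dl i m = true) : m = i := by
  by_contra hne
  rw [dl_ne hne] at h
  cases h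

lemma chainDist_self (t : Fin N) : chainDist t t = 0 := by
  rw [chainDist_eq]
  omega

lemma chainDist_comm (t j : Fin N) : chainDist t j = chainDist j t := by
  rw [chainDist_eq, chainDist_eq]
  omega

lemma kill (hsupp : ∀ X, SupportedOn (hd X) ↑X)
    (hprop : ∀ X, hd X ≠ 0 → X.Nonempty ∧ ChainDiamLE X R)
    (hHsum : H = ∑ X : Finset (Fin N), hd X)
    (f g : Fin N → Bool) (u v : Fin N)
    (hu : f u ≠ g u) (hv : f v ≠ g v) (hdist : R ≤ chainDist u v) :
    H (basisVec f) g = 0 := by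
  rw [hHsum, LinearMap.sum_apply, Finset.sum_apply]
  refine Finset.sum_eq_zero fun X _ => ?_
  by_cases hX : hd X = 0
  · rw [hX]; rfl
  obtain ⟨-, hdiam⟩ := hprop X hX
  by_cases hout : ∃ i, i ∉ (X : Set (Fin N)) ∧ f i ≠ g i
  · exact (hsupp X).1 f g hout
  · push_neg at hout
    have hu' : u ∈ X := by
      by_contra hc
      exact hu (hout u (by simpa using hc))
    have hv' : v ∈ X := by
      by_contra hc
      exact hv (hout v (by simpa using hc))
    have := hdiam u hu' v hv'
    omega

lemma flip (hsupp : ∀ X, SupportedOn (hd X) ↑X)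
    (hprop : ∀ X, hd X ≠ 0 → X.Nonempty ∧ ChainDiamLE X R)
    (hHsum : H = ∑ X : Finset (Fin N), hd X) (hR : 0 < R)
    (f g : Fin N → Bool) (j : Fin N) (b : Bool) (hj : f j = g j)
    (t : Fin N) (ht : f t ≠ g t) (hdist : R ≤ chainDist t j) :
    H (basisVec f) g = H (basisVec (Function.update f j b)) (Function.update g j b) := by
  rw [hHsum, LinearMap.sum_apply, Finset.sum_apply, LinearMap.sum_apply, Finset.sum_apply]
  refine Finset.sum_congr rfl fun X _ => ?_
  by_cases hX : hd X = 0
  · rw [hX]; rfl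
  obtain ⟨-, hdiam⟩ := hprop X hX
  have htj : t ≠ j := by
    intro h
    rw [h, chainDist_self] at hdist
    omega
  by_cases hout : ∃ i, i ∉ (X : Set (Fin N)) ∧ f i ≠ g i
  · obtain ⟨i, hiX, hine⟩ := hout
    have hij : i ≠ j := fun h => hine (h ▸ hj)
    rw [(hsupp X).1 f g ⟨i, hiX, hine⟩]
    refine ((hsupp X).1 _ _ ⟨i, hiX, ?_⟩).symm
    rwa [Function.update_of_ne hij, Function.update_of_ne hij]
  · push_neg at hout
    have htX : t ∈ X := by
      by_contra hc
      exact ht (hout t (by simpa using hc))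
    have hjX : j ∉ X := by
      intro hjX
      have := hdiam t htX j hjX
      omega
    refine (hsupp X).2 f (Function.update f j b) g (Function.update g j b) ?_ ?_ ?_ ?_
    · intro i hi
      have hij : i ≠ j := fun h => hjX (by rw [← h]; simpa using hi)
      rw [Function.update_of_ne hij]
    · intro i hi
      have hij : i ≠ j := fun h => hjX (by rw [← h]; simpa using hi)
      rw [Function.update_of_ne hij]
    · intro i hi
      exact hout i hi
    · intro i hi
      rcases eq_or_ne i j with rfl | hij
      · rw [Function.update_self, Function.update_self]
      · rw [Function.update_of_ne hij, Function.update_of_ne hij]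
        exact hout i hi

lemma eigen (hW : H (WState (Fin N) 1) = lam • WState (Fin N) 1) (g : Fin N → Bool) :
    ∑ i : Fin N, H (basisVec (dl i)) g = lam * (WState (Fin N) 1 g) := by
  calc ∑ i : Fin N, H (basisVec (dl i)) g
      = (∑ i : Fin N, H (basisVec (dl i))) g := (Finset.sum_apply _ _ _).symm
    _ = H (WState (Fin N) 1) g := by rw [← op_W]
    _ = lam * WState (Fin N) 1 g := by rw [hW]; rfl

lemma Wg_zero {g : Fin N → Bool} (h : ∀ i, g ≠ dl i) : WState (Fin N) 1 g = 0 := by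
  rw [WState_one_apply]
  exact Finset.sum_eq_zero fun i _ => if_neg (h i)

lemma two_true_not_dl {g : Fin N → Bool} {u v : Fin N} (huv : u ≠ v)
    (hu : g u = true) (hv : g v = true) : ∀ i, g ≠ dl i := by
  intro i hg
  rw [hg] at hu hv
  exact huv ((dl_true_imp hu).trans (dl_true_imp hv).symm)

lemma far_site (hR : 0 < R) (hbig : 4*R < N) (t : Fin N) :
    ∃ j : Fin N, 2*R ≤ chainDist t j := by
  have hN : 0 < N := by omega
  rcases le_or_gt (2*R) (t : ℕ) with h | h
  · refine ⟨⟨0, hN⟩, ?_⟩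
    have hc : ((⟨0, hN⟩ : Fin N) : ℕ) = 0 := rfl
    rw [chainDist_eq, hc]
    omega
  · have hN1 : N - 1 < N := by omega
    refine ⟨⟨N-1, hN1⟩, ?_⟩
    have hc : ((⟨N-1, hN1⟩ : Fin N) : ℕ) = N - 1 := rfl
    rw [chainDist_eq, hc]
    have := t.isLt
    omega

lemma brel (hsupp : ∀ X, SupportedOn (hd X) ↑X)
    (hprop : ∀ X, hd X ≠ 0 → X.Nonempty ∧ ChainDiamLE X R)
    (hHsum : H = ∑ X : Finset (Fin N), hd X) (hR : 0 < R)
    (hW : H (WState (Fin N) 1) = lam • WState (Fin N) 1)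
    (t j : Fin N) (hdist : R ≤ chainDist t j) :
    H (basisVec c0) (dl t) + H (basisVec c0) (dl j) = 0 := by
  have htj : t ≠ j := by
    intro h
    rw [h, chainDist_self] at hdist
    omega
  set g' : Fin N → Bool := Function.update (dl t) j true with hg'
  have hg't : g' t = true := by rw [hg', Function.update_of_ne htj, dl_self]
  have hg'j : g' j = true := by rw [hg', Function.update_self]
  -- flip 1 : b_t = A(dl j, g')
  have flip1 : H (basisVec c0) (dl t) = H (basisVec (dl j)) g' := by
    have h0 : Function.update c0 j true = dl j := rfl
    have := flip hsupp hprop hHsum hR c0 (dl t) j true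
      (by rw [c0_apply, dl_ne (fun h : j = t => htj h.symm)])
      t (by rw [c0_apply, dl_self]; exact fun h => by cases h) hdist
    rwa [h0] at this
  -- flip 2 : A(dl t, g') = b_j
  have flip2 : H (basisVec (dl t)) g' = H (basisVec c0) (dl j) := by
    have h0 : Function.update (dl t) t false = c0 := by
      funext m
      rcases eq_or_ne m t with rfl | hmt
      · rw [Function.update_self, c0_apply]
      · rw [Function.update_of_ne hmt, dl_ne hmt, c0_apply]
    have h1 : Function.update g' t false = dl j := by
      funext m
      rcases eq_or_ne m t with rfl | hmt
      · rw [Function.update_self, dl_ne htj]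
      · rw [Function.update_of_ne hmt, hg']
        rcases eq_or_ne m j with rfl | hmj
        · rw [Function.update_self, dl_self]
        · rw [Function.update_of_ne hmj, dl_ne hmt, dl_ne hmj]
    have := flip hsupp hprop hHsum hR (dl t) g' t false
      (by rw [dl_self, hg't])
      j (by rw [dl_ne (fun h : j = t => htj h.symm), hg'j]; exact fun h => by cases h)
      (by rwa [chainDist_comm])
    rwa [h0, h1] at this
  -- the eigenvalue equation at g'
  have heig := eigen hW g'
  rw [Wg_zero (two_true_not_dl htj hg't hg'j), mul_zero] at heig
  have hsplit : ∑ i : Fin N, H (basisVec (dl i)) g'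
      = H (basisVec (dl t)) g' + H (basisVec (dl j)) g' := by
    have hjmem : j ∈ (Finset.univ.erase t : Finset (Fin N)) :=
      Finset.mem_erase.2 ⟨fun h => htj h.symm, Finset.mem_univ j⟩
    rw [← Finset.add_sum_erase _ _ (Finset.mem_univ t),
      ← Finset.add_sum_erase _ _ hjmem]
    have hrest : ∑ i ∈ (Finset.univ.erase t).erase j, H (basisVec (dl i)) g' = 0 := by
      refine Finset.sum_eq_zero fun i hi => ?_
      rw [Finset.mem_erase, Finset.mem_erase] at hi
      obtain ⟨hij, hit, -⟩ := hi
      refine kill hsupp hprop hHsum (dl i) g' t j ?_ ?_ hdist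
      · rw [dl_ne (fun h : t = i => hit h.symm), hg't]
        exact fun h => by cases h
      · rw [dl_ne (fun h : j = i => hij h.symm), hg'j]
        exact fun h => by cases h
    rw [hrest, add_zero]
  rw [hsplit, flip2, ← flip1] at heig
  rw [add_comm]
  exact heig

lemma bvac (hsupp : ∀ X, SupportedOn (hd X) ↑X)
    (hprop : ∀ X, hd X ≠ 0 → X.Nonempty ∧ ChainDiamLE X R)
    (hHsum : H = ∑ X : Finset (Fin N), hd X) (hR : 0 < R) (hbig : 4*R < N)
    (hW : H (WState (Fin N) 1) = lam • WState (Fin N) 1)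
    (t : Fin N) : H (basisVec c0) (dl t) = 0 := by
  have hN : 0 < N := by omega
  set q1 : Fin N := ⟨0, by omega⟩ with hq1
  set q2 : Fin N := ⟨2*R, by omega⟩ with hq2
  set q3 : Fin N := ⟨4*R, by omega⟩ with hq3
  have hc1 : (q1 : ℕ) = 0 := rfl
  have hc2 : (q2 : ℕ) = 2*R := rfl
  have hc3 : (q3 : ℕ) = 4*R := rfl
  have h12 := brel hsupp hprop hHsum hR hW q1 q2 (by rw [chainDist_eq, hc1, hc2]; omega)
  have h23 := brel hsupp hprop hHsum hR hW q2 q3 (by rw [chainDist_eq, hc2, hc3]; omega)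
  have h13 := brel hsupp hprop hHsum hR hW q1 q3 (by rw [chainDist_eq, hc1, hc3]; omega)
  have hb1 : H (basisVec c0) (dl q1) = 0 := by linear_combination (h12 + h13 - h23) / 2
  have hb3 : H (basisVec c0) (dl q3) = 0 := by linear_combination (h23 + h13 - h12) / 2
  rcases le_or_gt (t : ℕ) (3*R) with hcase | hcase
  · have h := brel hsupp hprop hHsum hR hW t q3 (by
      rw [chainDist_eq, hc3]
      omega)
    linear_combination h - hb3
  · have h := brel hsupp hprop hHsum hR hW t q1 (by
      rw [chainDist_eq, hc1]
      omega)
    linear_combination h - hb1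

end StepA

section Hvac

open Finset

variable {R : ℕ} {H : Module.End ℂ (QState (Fin N))}
  {hd : Finset (Fin N) → Module.End ℂ (QState (Fin N))} {lam : ℂ}

lemma Hvac (hsupp : ∀ X, SupportedOn (hd X) ↑X)
    (hprop : ∀ X, hd X ≠ 0 → X.Nonempty ∧ ChainDiamLE X R)
    (hHsum : H = ∑ X : Finset (Fin N), hd X) (hR : 0 < R) (hbig : 4*R < N)
    (hW : H (WState (Fin N) 1) = lam • WState (Fin N) 1) :
    H (basisVec (c0 : Fin N → Bool)) = (H (basisVec c0) c0) • basisVec c0 := by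
  funext g
  rcases eq_or_ne g c0 with rfl | hg
  · show H (basisVec c0) c0 = H (basisVec c0) c0 * basisVec c0 c0
    rw [basisVec_apply, if_pos rfl, mul_one]
  · show H (basisVec c0) g = H (basisVec c0) c0 * basisVec c0 g
    rw [basisVec_apply, if_neg hg, mul_zero]
    by_cases hfar : ∃ u v : Fin N, g u = true ∧ g v = true ∧ R ≤ chainDist u v
    · obtain ⟨u, v, hu, hv, hduv⟩ := hfar
      exact kill hsupp hprop hHsum c0 g u v
        (by rw [c0_apply, hu]; exact fun h => by cases h)
        (by rw [c0_apply, hv]; exact fun h => by cases h) hduv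
    · push_neg at hfar
      obtain ⟨t0, ht0⟩ : ∃ t0, g t0 = true := by
        by_contra hc
        push_neg at hc
        refine hg (funext fun m => ?_)
        cases hm : g m
        · rfl
        · exact absurd hm (hc m)
      obtain ⟨j, hj⟩ := far_site hR hbig t0
      have hgj : g j = false := by
        cases hgj : g j
        · rfl
        · have := hfar t0 j ht0 hgj
          omega
      have ht0j : t0 ≠ j := by
        intro h
        rw [h, chainDist_self] at hj
        omega
      by_cases h2 : ∃ t1, g t1 = true ∧ t1 ≠ t0
      · obtain ⟨t1, ht1, ht10⟩ := h2
        set g' := Function.update g j true with hg'def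
        have hflip : H (basisVec c0) g = H (basisVec (dl j)) g' := by
          have h0 : Function.update c0 j true = dl j := rfl
          have := flip hsupp hprop hHsum hR c0 g j true
            (by rw [c0_apply, hgj]) t0
            (by rw [c0_apply, ht0]; exact fun h => by cases h) (by omega)
          rwa [h0] at this
        have hg't0 : g' t0 = true := by
          rw [hg'def, Function.update_of_ne ht0j]; exact ht0
        have ht1j : t1 ≠ j := by
          intro h
          rw [h, hgj] at ht1
          cases ht1
        have hg't1 : g' t1 = true := by
          rw [hg'def, Function.update_of_ne ht1j]; exact ht1
        have hg'j : g' j = true := by rw [hg'def, Function.update_self]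
        have heig := eigen hW g'
        rw [Wg_zero (two_true_not_dl (fun h : t0 = t1 => ht10 h.symm) hg't0 hg't1),
          mul_zero] at heig
        have hrest : ∑ i ∈ Finset.univ.erase j, H (basisVec (dl i)) g' = 0 := by
          refine Finset.sum_eq_zero fun i hi => ?_
          have hij : i ≠ j := (Finset.mem_erase.1 hi).1
          by_cases hit0 : i = t0
          · subst hit0
            refine kill hsupp hprop hHsum (dl i) g' t1 j ?_ ?_ ?_
            · rw [dl_ne (fun h : t1 = i => ht10 h), hg't1]
              exact fun h => by cases h
            · rw [dl_ne (fun h : j = i => hij h.symm), hg'j]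
              exact fun h => by cases h
            · have h1 := hfar i t1 ht0 ht1
              rw [chainDist_eq] at hj h1 ⊢
              omega
          · refine kill hsupp hprop hHsum (dl i) g' t0 j ?_ ?_ ?_
            · rw [dl_ne (fun h : t0 = i => hit0 h.symm), hg't0]
              exact fun h => by cases h
            · rw [dl_ne (fun h : j = i => hij h.symm), hg'j]
              exact fun h => by cases h
            · rw [chainDist_eq] at hj ⊢
              omega
        rw [← Finset.add_sum_erase _ _ (Finset.mem_univ j), hrest, add_zero] at heig
        rw [hflip, heig]
      · push_neg at h2
        have hgdl : g = dl t0 := by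
          funext m
          rcases eq_or_ne m t0 with rfl | hm
          · rw [dl_self, ht0]
          · rw [dl_ne hm]
            cases hgm : g m
            · rfl
            · exact absurd (h2 m hgm) hm
        rw [hgdl]
        exact bvac hsupp hprop hHsum hR hbig hW t0

end Hvac

end WP

end

open WP in
/-- Decomposition of a range-R parent Hamiltonian of the W state on the
open chain of N > 4R qubit sites. -/
theorem W_parent_decomposition_1D
    (R N : ℕ) (hR : 0 < R) (hN : 0 < N) (hbig : 4 * R < N)
    (H : Module.End ℂ (QState (Fin N))) (lam : ℂ)
    (hH : IsChainRangeHam R H)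
    (hW : H (WState (Fin N) 1) = lam • WState (Fin N) 1) :
    ∃ (Ω ω : ℂ) (h : Finset (Fin N) → Module.End ℂ (QState (Fin N))),
      (∀ X, SupportedOn (h X) ↑X) ∧
      (∀ X, h X ≠ 0 → X.Nonempty ∧ ChainDiamLE X (2 * R)) ∧
      (∀ X, h X (WState (Fin N) 1) = 0 ∧ h X (vac (Fin N)) = 0) ∧
      H = Ω • (1 : Module.End ℂ (QState (Fin N))) + ω • numOp (Fin N)
            + ∑ X : Finset (Fin N), h X := by
  classical
  obtain ⟨hd, hsupp, hprop, hHsum⟩ := hH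
  set Ω : ℂ := H (basisVec c0) c0 with hΩdef
  set ω : ℂ := lam - Ω with hωdef
  set Kop : Module.End ℂ (QState (Fin N)) := H - Ω • 1 - ω • numOp (Fin N) with hKdef
  set L : ℕ := 2*R - 1 with hLdef
  set SS : ℕ := N - L with hSSdef
  have hL : 0 < L := by omega
  have hSS : N = SS + L := by omega
  have hvacEq : H (basisVec c0) = Ω • basisVec c0 := by
    have := Hvac hsupp hprop hHsum hR hbig hW
    rwa [← hΩdef] at this
  set σX : Finset (Fin N) → ℕ :=
    fun X => if hX : X.Nonempty then min ((X.min' hX : Fin N) : ℕ) SS else 0 with hσdef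
  set κ : ℕ → Module.End ℂ (QState (Fin N)) := fun s =>
    (∑ X ∈ Finset.univ.filter (fun X => σX X = s), hd X)
    + (if s = 0 then (-Ω) • (1 : Module.End ℂ (QState (Fin N))) else 0)
    + (∑ i ∈ Finset.univ.filter (fun i : Fin N => min (i:ℕ) SS = s),
        (-ω) • (creOp i * annOp i)) with hκdef
  have hσle : ∀ X, σX X ≤ SS := by
    intro X
    rw [hσdef]
    dsimp only
    split
    · exact min_le_right _ _
    · omega
  have hκvan : ∀ s, SS < s → κ s = 0 := by
    intro s hs
    rw [hκdef]
    dsimp only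
    have e1 : ∑ X ∈ Finset.univ.filter (fun X => σX X = s), hd X = 0 :=
      Finset.sum_eq_zero fun X hX =>
        absurd ((Finset.mem_filter.1 hX).2) (by have := hσle X; omega)
    have e2 : (if s = 0 then (-Ω) • (1 : Module.End ℂ (QState (Fin N))) else 0) = 0 :=
      if_neg (by omega)
    have e3 : ∑ i ∈ Finset.univ.filter (fun i : Fin N => min (i:ℕ) SS = s),
        (-ω) • (creOp i * annOp i) = 0 :=
      Finset.sum_eq_zero fun i hi =>
        absurd ((Finset.mem_filter.1 hi).2)
          (by have : min (i:ℕ) SS ≤ SS := min_le_right _ _; omega)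
    rw [e1, e2, e3, add_zero, add_zero]
  have hκsupp : ∀ s, SupportedOn (κ s) ↑(win L s : Finset (Fin N)) := by
    intro s
    rw [hκdef]
    dsimp only
    refine sOn_add (sOn_add (sOn_sum _ _ fun X hX => ?_) ?_)
      (sOn_sum _ _ fun i hi => ?_)
    · rw [Finset.mem_filter] at hX
      by_cases hX0 : hd X = 0
      · rw [hX0]; exact sOn_zero _
      obtain ⟨hne, hdiam⟩ := hprop X hX0
      refine sOn_mono (hsupp X) ?_
      rw [Finset.coe_subset]
      intro x hx
      have hmle : X.min' hne ≤ x := X.min'_le x hx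
      rw [Fin.le_def] at hmle
      have hd2 := hdiam x hx (X.min' hne) (X.min'_mem hne)
      have hs2 : σX X = s := hX.2
      rw [hσdef] at hs2
      dsimp only at hs2
      rw [dif_pos hne] at hs2
      rw [mem_win]
      rw [chainDist_eq] at hd2
      have hxN := x.isLt
      omega
    · split
      · exact sOn_smul _ (sOn_one _)
      · exact sOn_zero _
    · rw [Finset.mem_filter] at hi
      refine sOn_smul _ (sOn_mono (sOn_n i) ?_)
      intro x hx
      rw [Set.mem_singleton_iff] at hx
      subst hx
      rw [Finset.mem_coe, mem_win]
      have hiN := x.isLt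
      have hmin := hi.2
      omega
  have hκsum : ∑ s ∈ Finset.range (SS+1), κ s = Kop := by
    rw [hκdef]
    dsimp only
    rw [Finset.sum_add_distrib, Finset.sum_add_distrib]
    have e1 : ∑ s ∈ Finset.range (SS+1),
        ∑ X ∈ Finset.univ.filter (fun X => σX X = s), hd X
        = ∑ X : Finset (Fin N), hd X :=
      Finset.sum_fiberwise_of_maps_to
        (fun X _ => Finset.mem_range.2 (by have := hσle X; omega)) _
    have e2 : ∑ s ∈ Finset.range (SS+1),
        (if s = 0 then (-Ω) • (1 : Module.End ℂ (QState (Fin N))) else 0)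
        = (-Ω) • (1 : Module.End ℂ (QState (Fin N))) := by
      rw [Finset.sum_ite_eq' (Finset.range (SS+1)) 0
        (fun _ => (-Ω) • (1 : Module.End ℂ (QState (Fin N))))]
      rw [if_pos (Finset.mem_range.2 (by omega))]
    have e3 : ∑ s ∈ Finset.range (SS+1),
        ∑ i ∈ Finset.univ.filter (fun i : Fin N => min (i:ℕ) SS = s),
          (-ω) • (creOp i * annOp i)
        = ∑ i : Fin N, (-ω) • (creOp i * annOp i) :=
      Finset.sum_fiberwise_of_maps_to
        (fun i _ => Finset.mem_range.2
          (by have : min (i:ℕ) SS ≤ SS := min_le_right _ _; omega)) _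
    rw [e1, e2, e3, ← Finset.smul_sum]
    have hnum : (∑ i : Fin N, creOp i * annOp i) = numOp (Fin N) := rfl
    rw [hnum, hKdef, hHsum]
    module
  have hK0 : Kop (basisVec c0) = 0 := by
    rw [hKdef, LinearMap.sub_apply, LinearMap.sub_apply, LinearMap.smul_apply,
      LinearMap.smul_apply, Module.End.one_apply]
    have hnv : numOp (Fin N) (basisVec c0) = 0 := numOp_vac
    rw [hnv, smul_zero, hvacEq, sub_zero, sub_self]
  have hKW : Kop (WState (Fin N) 1) = 0 := by
    rw [hKdef, LinearMap.sub_apply, LinearMap.sub_apply, LinearMap.smul_apply,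
      LinearMap.smul_apply, Module.End.one_apply]
    have hnW : numOp (Fin N) (WState (Fin N) 1) = WState (Fin N) 1 := numOp_W
    rw [hnW, hW, hωdef, sub_smul]
    abel
  obtain ⟨h, hs1, hs2, hs3, hs4⟩ := decompose_K hL hSS hκsupp hκvan hκsum hK0 hKW
  refine ⟨Ω, ω, h, hs1, ?_, ?_, ?_⟩
  · intro X hX
    obtain ⟨hne, hdiam⟩ := hs2 X hX
    refine ⟨hne, ?_⟩
    have hLL : L + 1 = 2*R := by omega
    rwa [hLL] at hdiam
  · intro X
    refine ⟨(hs3 X).1, ?_⟩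
    show h X (vac (Fin N)) = 0
    rw [vac_eq]
    exact (hs3 X).2
  · rw [hs4, hKdef]
    abel
end

section
/- Let R_max and N be positive integers. For each nonempty subset X ⊆ {0,…,N−1} with diam(X) ≤ R_max, let h_X be an operator supported on X with h_X |W⟩ = 0 and h_X |0̄⟩ = 0. If p is a natural number with p·R_max ≤ N and (∑_X h_X) |W^p⟩ = E'·|W^p⟩ for some E' ∈ ℂ, then E' = 0. -/
open scoped BigOperators
set_option linter.unusedSectionVars false

noncomputable section AFF
namespace AFF

variable {V : Type*} [Fintype V] [DecidableEq V]

def trues (f : V → Bool) : Finset V := Finset.univ.filter (fun i => f i = true)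

lemma mem_trues {f : V → Bool} {i : V} : i ∈ trues f ↔ f i = true := by
  simp [trues]

lemma eq_of_trues_eq {f g : V → Bool} (h : trues f = trues g) : f = g := by
  funext i
  have h2 : (f i = true) ↔ (g i = true) := by
    rw [← mem_trues, ← mem_trues, h]
  cases hf : f i <;> cases hg : g i <;> simp_all

lemma trues_update_false (f : V → Bool) (i : V) :
    trues (Function.update f i false) = (trues f).erase i := by
  ext j
  by_cases hji : j = i
  · subst hji; simp [mem_trues]
  · simp [mem_trues, Function.update_of_ne hji, hji]

lemma sdag_apply (ψ : QState V) (g : V → Bool) :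
    Sdag V ψ g = ∑ i ∈ trues g, ψ (Function.update g i false) := by
  have h1 : Sdag V ψ g = ∑ i : V, creOp i ψ g := by
    rw [Sdag, LinearMap.sum_apply]; exact Finset.sum_apply g _ _
  rw [h1, trues, Finset.sum_filter]
  rfl

lemma wstate_apply (p : ℕ) (f : V → Bool) :
    WState V p f = if (trues f).card = p then (p.factorial : ℂ) else 0 := by
  induction p generalizing f with
  | zero =>
    have h0 : WState V 0 f = vac V f := rfl
    rw [h0, vac, basisVec]
    by_cases hf : f = fun _ => false
    · subst hf; simp [trues]
    · have hc : (trues f).card ≠ 0 := by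
        intro hc
        apply hf; funext i
        have h3 : trues f = ∅ := Finset.card_eq_zero.mp hc
        have : i ∉ trues f := by rw [h3]; exact Finset.notMem_empty i
        rw [mem_trues] at this
        simpa using this
      simp [hf, hc]
  | succ p ih =>
    have hW : WState V (p+1) f = Sdag V (WState V p) f := by
      rw [WState, WState, pow_succ']
      rfl
    rw [hW, sdag_apply]
    by_cases hc : (trues f).card = p + 1
    · rw [if_pos hc]
      have hterm : ∀ i ∈ trues f,
          WState V p (Function.update f i false) = (p.factorial : ℂ) := by
        intro i hi
        rw [ih, trues_update_false, if_pos]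
        rw [Finset.card_erase_of_mem hi, hc]
        omega
      rw [Finset.sum_congr rfl hterm, Finset.sum_const, hc, nsmul_eq_mul]
      push_cast [Nat.factorial_succ]
      ring
    · rw [if_neg hc]
      apply Finset.sum_eq_zero
      intro i hi
      rw [ih, trues_update_false, if_neg]
      intro hcon
      rw [Finset.card_erase_of_mem hi] at hcon
      have := Finset.card_pos.mpr ⟨i, hi⟩
      omega

lemma expand (O : Module.End ℂ (QState V)) (ψ : QState V) (g : V → Bool) :
    O ψ g = ∑ f : V → Bool, ψ f * O (basisVec f) g := by
  have hψ : ψ = ∑ f : V → Bool, ψ f • basisVec f := by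
    funext x
    rw [Finset.sum_apply]
    simp [basisVec]
  conv_lhs => rw [hψ]
  rw [map_sum, Finset.sum_apply]
  simp

def delta (j : V) : V → Bool := fun i => decide (i = j)

lemma trues_delta (j : V) : trues (delta j) = {j} := by
  ext i; simp [mem_trues, delta]

lemma eq_delta_of_card_one {f : V → Bool} (hf : (trues f).card = 1) :
    ∃ j, f = delta j := by
  obtain ⟨j, hj⟩ := Finset.card_eq_one.mp hf
  refine ⟨j, funext fun i => ?_⟩
  have hiff : f i = true ↔ i = j := by rw [← mem_trues, hj, Finset.mem_singleton]
  by_cases hij : i = j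
  · subst hij; simp [delta, hiff.mpr rfl]
  · have hfi : f i = false := by
      cases hfi : f i
      · rfl
      · exact absurd (hiff.mp hfi) hij
    simp [delta, hij, hfi]

lemma sum_delta_eq (O : Module.End ℂ (QState V)) (g : V → Bool) :
    ∑ j : V, O (basisVec (delta j)) g = O (WState V 1) g := by
  rw [expand]
  rw [← Finset.sum_filter_add_sum_filter_not Finset.univ
    (fun f => (trues f).card = 1)]
  have h2 : ∑ f ∈ Finset.univ.filter (fun f : V → Bool => ¬ (trues f).card = 1),
      (WState V 1 f) * O (basisVec f) g = 0 := by
    apply Finset.sum_eq_zero; intro f hf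
    rw [Finset.mem_filter] at hf
    rw [wstate_apply, if_neg hf.2, zero_mul]
  rw [h2, add_zero]
  have himg : Finset.univ.filter (fun f : V → Bool => (trues f).card = 1)
      = Finset.univ.image delta := by
    ext f
    simp only [Finset.mem_filter, Finset.mem_image, Finset.mem_univ, true_and]
    constructor
    · intro hf; obtain ⟨j, hj⟩ := eq_delta_of_card_one hf; exact ⟨j, hj.symm⟩
    · rintro ⟨j, rfl⟩; rw [trues_delta]; simp
  have hinj : ∀ a ∈ Finset.univ, ∀ b ∈ Finset.univ, delta (V := V) a = delta b → a = b := by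
    intro a _ b _ hab
    have h3 : delta a a = delta b a := by rw [hab]
    simp [delta] at h3
    exact h3
  rw [himg, Finset.sum_image hinj]
  apply Finset.sum_congr rfl
  intro j _
  rw [wstate_apply, trues_delta]
  simp


def Fmod (X : Finset V) (g : V → Bool) (j : V) : V → Bool :=
  fun i => if i ∈ X then delta j i else g i

lemma key (O : Module.End ℂ (QState V)) (X : Finset V)
    (hs : SupportedOn O ↑X) (hv : O (vac V) = 0) (hw : O (WState V 1) = 0)
    (p : ℕ) (g : V → Bool) (hint : ((trues g) ∩ X).card ≤ 1)
    (hg : (trues g).card = p) :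
    O (WState V p) g = 0 := by
  classical
  rw [expand]
  set A : Finset (V → Bool) :=
    Finset.univ.filter (fun f => (∀ i ∉ X, f i = g i) ∧ (trues f).card = p) with hA
  have hrestrict : ∑ f : V → Bool, WState V p f * O (basisVec f) g
      = ∑ f ∈ A, WState V p f * O (basisVec f) g := by
    symm
    apply Finset.sum_subset (Finset.subset_univ A)
    intro f _ hfA
    simp only [hA, Finset.mem_filter, Finset.mem_univ, true_and, not_and] at hfA
    by_cases hcard : (trues f).card = p
    · have hex : ∃ i, i ∉ X ∧ f i ≠ g i := by
        by_contra hno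
        push_neg at hno
        exact hfA (fun i hi => hno i hi) hcard
      obtain ⟨i, hiX, hine⟩ := hex
      rw [hs.1 f g ⟨i, by simpa using hiX, hine⟩, mul_zero]
    · rw [wstate_apply, if_neg hcard, zero_mul]
  rw [hrestrict]
  rcases Nat.le_one_iff_eq_zero_or_eq_one.mp hint with h0 | h1
  · -- no excitation of g inside X
    have hgX : trues g ∩ X = ∅ := Finset.card_eq_zero.mp h0
    have hAg : A = {g} := by
      apply Finset.Subset.antisymm
      · intro f hf
        simp only [hA, Finset.mem_filter, Finset.mem_univ, true_and] at hf
        rw [Finset.mem_singleton]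
        apply eq_of_trues_eq
        have hsub : trues g ⊆ trues f := by
          intro i hi
          have hiX : i ∉ X := fun hmem =>
            (Finset.notMem_empty i) (hgX ▸ Finset.mem_inter.mpr ⟨hi, hmem⟩)
          rw [mem_trues, hf.1 i hiX, ← mem_trues]
          exact hi
        exact (Finset.eq_of_subset_of_card_le hsub (by rw [hf.2, hg])).symm
      · intro f hf
        rw [Finset.mem_singleton] at hf; subst hf
        exact Finset.mem_filter.mpr ⟨Finset.mem_univ _, fun i _ => rfl, hg⟩
    rw [hAg, Finset.sum_singleton]
    have hgf : ∀ i ∈ (↑X : Set V), g i = (fun _ : V => false) i := by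
      intro i hi
      rw [Finset.mem_coe] at hi
      cases hgi : g i
      · rfl
      · exact absurd (hgX ▸ Finset.mem_inter.mpr ⟨mem_trues.mpr hgi, hi⟩)
          (Finset.notMem_empty i)
    have hOg : O (basisVec g) g = 0 := by
      have h2 := hs.2 g (fun _ => false) g (fun _ => false) hgf hgf
        (fun i _ => rfl) (fun i _ => rfl)
      rw [h2]
      have hbv : basisVec (V := V) (fun _ => false) = vac V := rfl
      rw [hbv, hv]
      rfl
    rw [hOg, mul_zero]
  · -- exactly one excitation i0 of g inside X
    obtain ⟨i0, hi0⟩ := Finset.card_eq_one.mp h1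
    have hi0mem := hi0 ▸ Finset.mem_singleton_self i0
    have hi0X : i0 ∈ X := (Finset.mem_inter.mp hi0mem).2
    have hi0g : g i0 = true := mem_trues.mp (Finset.mem_inter.mp hi0mem).1
    have hgiff : ∀ i ∈ X, (g i = true ↔ i = i0) := by
      intro i hiX
      constructor
      · intro hgi
        have hmm : i ∈ trues g ∩ X := Finset.mem_inter.mpr ⟨mem_trues.mpr hgi, hiX⟩
        rw [hi0] at hmm
        exact Finset.mem_singleton.mp hmm
      · rintro rfl; exact hi0g
    have hcardoff : (trues g \ X).card + 1 = p := by
      have hc := Finset.card_inter_add_card_sdiff (trues g) X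
      omega
    have hFint : ∀ j ∈ X, trues (Fmod X g j) ∩ X = {j} := by
      intro j hjX
      ext i
      simp only [Finset.mem_inter, mem_trues, Fmod, Finset.mem_singleton]
      constructor
      · rintro ⟨hfi, hiX⟩
        rw [if_pos hiX] at hfi
        simpa [delta] using hfi
      · rintro rfl
        exact ⟨by rw [if_pos hjX]; simp [delta], hjX⟩
    have hFsd : ∀ j, trues (Fmod X g j) \ X = trues g \ X := by
      intro j
      ext i
      simp only [Finset.mem_sdiff, mem_trues, Fmod]
      constructor
      · rintro ⟨hfi, hiX⟩
        rw [if_neg hiX] at hfi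
        exact ⟨hfi, hiX⟩
      · rintro ⟨hgi, hiX⟩
        exact ⟨by rw [if_neg hiX]; exact hgi, hiX⟩
    have hcardF : ∀ j ∈ X, (trues (Fmod X g j)).card = p := by
      intro j hjX
      have hcf := Finset.card_inter_add_card_sdiff (trues (Fmod X g j)) X
      rw [hFint j hjX, hFsd j] at hcf
      simp only [Finset.card_singleton] at hcf
      omega
    have hAF : A = X.image (Fmod X g) := by
      ext f
      simp only [hA, Finset.mem_filter, Finset.mem_univ, true_and, Finset.mem_image]
      constructor
      · rintro ⟨hoff, hcard⟩
        have hsd : trues f \ X = trues g \ X := by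
          ext i
          simp only [Finset.mem_sdiff, mem_trues]
          constructor
          · rintro ⟨hfi, hiX⟩
            exact ⟨by rw [← hoff i hiX]; exact hfi, hiX⟩
          · rintro ⟨hgi, hiX⟩
            exact ⟨by rw [hoff i hiX]; exact hgi, hiX⟩
        have hcf := Finset.card_inter_add_card_sdiff (trues f) X
        rw [hsd] at hcf
        have hcint : (trues f ∩ X).card = 1 := by omega
        obtain ⟨j, hj⟩ := Finset.card_eq_one.mp hcint
        have hjmem := hj ▸ Finset.mem_singleton_self j
        have hjX : j ∈ X := (Finset.mem_inter.mp hjmem).2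
        refine ⟨j, hjX, ?_⟩
        funext i
        by_cases hiX : i ∈ X
        · show Fmod X g j i = f i
          rw [Fmod, if_pos hiX]
          have hiff : f i = true ↔ i = j := by
            constructor
            · intro hfi
              have hmm : i ∈ trues f ∩ X := Finset.mem_inter.mpr ⟨mem_trues.mpr hfi, hiX⟩
              rw [hj] at hmm
              exact Finset.mem_singleton.mp hmm
            · rintro rfl
              exact mem_trues.mp (Finset.mem_inter.mp hjmem).1
          by_cases hij : i = j
          · subst hij; simp [delta, hiff.mpr rfl]
          · have hfi : f i = false := by
              cases hfi : f i
              · rfl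
              · exact absurd (hiff.mp hfi) hij
            simp [delta, hij, hfi]
        · show Fmod X g j i = f i
          rw [Fmod, if_neg hiX]
          exact (hoff i hiX).symm
      · rintro ⟨j, hjX, rfl⟩
        refine ⟨fun i hiX => by rw [Fmod, if_neg hiX], hcardF j hjX⟩
    have hinjF : ∀ a ∈ X, ∀ b ∈ X, Fmod X g a = Fmod X g b → a = b := by
      intro a haX b hbX hab
      have hval : Fmod X g a a = Fmod X g b a := by rw [hab]
      simp only [Fmod, if_pos haX] at hval
      simpa [delta] using hval
    rw [hAF, Finset.sum_image hinjF]
    have hgd : ∀ i ∈ (↑X : Set V), g i = delta i0 i := by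
      intro i hi
      rw [Finset.mem_coe] at hi
      by_cases hii0 : i = i0
      · subst hii0; simp [delta, hi0g]
      · have hgi : g i = false := by
          cases hgi : g i
          · rfl
          · exact absurd ((hgiff i hi).mp hgi) hii0
        simp [delta, hii0, hgi]
    have hterm : ∀ j ∈ X, WState V p (Fmod X g j) * O (basisVec (Fmod X g j)) g
        = (p.factorial : ℂ) * O (basisVec (delta j)) (delta i0) := by
      intro j hjX
      have hW : WState V p (Fmod X g j) = (p.factorial : ℂ) := by
        rw [wstate_apply, if_pos (hcardF j hjX)]
      have hOO : O (basisVec (Fmod X g j)) g = O (basisVec (delta j)) (delta i0) := by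
        apply hs.2 (Fmod X g j) (delta j) g (delta i0)
        · intro i hi
          rw [Finset.mem_coe] at hi
          rw [Fmod, if_pos hi]
        · exact hgd
        · intro i hi
          rw [Finset.mem_coe] at hi
          rw [Fmod, if_neg hi]
        · intro i hi
          rw [Finset.mem_coe] at hi
          have hij : i ≠ j := fun h => hi (h ▸ hjX)
          have hii0 : i ≠ i0 := fun h => hi (h ▸ hi0X)
          simp [delta, hij, hii0]
      rw [hW, hOO]
    rw [Finset.sum_congr rfl hterm, ← Finset.mul_sum]
    have hsum : ∑ j ∈ X, O (basisVec (delta j)) (delta i0) = 0 := by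
      have hext : ∑ j ∈ X, O (basisVec (delta j)) (delta i0)
          = ∑ j : V, O (basisVec (delta j)) (delta i0) := by
        apply Finset.sum_subset (Finset.subset_univ X)
        intro j _ hjX
        have hji0 : j ≠ i0 := fun h => hjX (h ▸ hi0X)
        refine hs.1 _ _ ⟨j, by simpa using hjX, ?_⟩
        simp [delta, hji0]
      rw [hext, sum_delta_eq, hw]
      rfl
    rw [hsum, mul_zero]

end AFF
end AFF
/-- Annihilation of a finite fraction of the Dicke tower on the open chain:
a sum of local annihilators of `|W⟩` and `|0̄⟩` with diameters at most `R_max` has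
eigenvalue 0 on `|W^p⟩` whenever `p · R_max ≤ N`. -/
theorem annihilation_finite_fraction_1D
    (Rmax N : ℕ) (hRmax : 0 < Rmax) (hN : 0 < N)
    (h : Finset (Fin N) → Module.End ℂ (QState (Fin N)))
    (hsupp : ∀ X, SupportedOn (h X) ↑X)
    (hdiam : ∀ X, ¬(X.Nonempty ∧ ChainDiamLE X Rmax) → h X = 0)
    (hannW : ∀ X, h X (WState (Fin N) 1) = 0)
    (hannv : ∀ X, h X (vac (Fin N)) = 0)
    (p : ℕ) (hp : p * Rmax ≤ N) (E' : ℂ)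
    (hE : (∑ X : Finset (Fin N), h X) (WState (Fin N) p) = E' • WState (Fin N) p) :
    E' = 0 := by
  classical
  have hlt : ∀ k : ℕ, k < p → k * Rmax < N := by
    intro k hk
    calc k * Rmax < (k + 1) * Rmax := by nlinarith
    _ ≤ p * Rmax := Nat.mul_le_mul_right _ hk
    _ ≤ N := hp
  set g : Fin N → Bool :=
    fun i => decide (∃ k : Fin p, (i : ℕ) = (k : ℕ) * Rmax) with hgdef
  have hgtrue : ∀ i : Fin N, g i = true ↔ ∃ k : Fin p, (i : ℕ) = (k : ℕ) * Rmax := by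
    intro i; simp [hgdef]
  have hcardg : (AFF.trues g).card = p := by
    have himg : AFF.trues g = Finset.univ.image
        (fun k : Fin p => (⟨(k : ℕ) * Rmax, hlt k k.2⟩ : Fin N)) := by
      ext i
      simp only [AFF.mem_trues, Finset.mem_image, Finset.mem_univ, true_and]
      rw [hgtrue]
      constructor
      · rintro ⟨k, hk⟩
        exact ⟨k, by apply Fin.ext; simp [hk.symm]⟩
      · rintro ⟨k, rfl⟩
        exact ⟨k, rfl⟩
    have hinj : Function.Injective
        (fun k : Fin p => (⟨(k : ℕ) * Rmax, hlt k k.2⟩ : Fin N)) := by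
      intro a b hab
      have hval : (a : ℕ) * Rmax = (b : ℕ) * Rmax := by
        simpa using congrArg Fin.val hab
      exact Fin.ext (Nat.eq_of_mul_eq_mul_right hRmax hval)
    rw [himg, Finset.card_image_of_injective _ hinj, Finset.card_univ, Fintype.card_fin]
  have hspace : ∀ i j : Fin N, g i = true → g j = true → i ≠ j →
      Rmax ≤ chainDist i j := by
    intro i j hi hj hij
    obtain ⟨a, ha⟩ := (hgtrue i).mp hi
    obtain ⟨b, hb⟩ := (hgtrue j).mp hj
    have hab : (a : ℕ) ≠ (b : ℕ) := by
      intro hh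
      exact hij (Fin.ext (by rw [ha, hb, hh]))
    have hdisj : (i : ℕ) + Rmax ≤ (j : ℕ) ∨ (j : ℕ) + Rmax ≤ (i : ℕ) := by
      rcases Nat.lt_or_ge (a : ℕ) (b : ℕ) with hcase | hcase
      · left
        have hstep : ((a : ℕ) + 1) * Rmax ≤ (b : ℕ) * Rmax := Nat.mul_le_mul_right _ hcase
        calc (i : ℕ) + Rmax = ((a : ℕ) + 1) * Rmax := by rw [ha]; ring
        _ ≤ (b : ℕ) * Rmax := hstep
        _ = (j : ℕ) := hb.symm
      · right
        have hblt : (b : ℕ) < (a : ℕ) := lt_of_le_of_ne hcase (Ne.symm hab)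
        have hstep : ((b : ℕ) + 1) * Rmax ≤ (a : ℕ) * Rmax := Nat.mul_le_mul_right _ hblt
        calc (j : ℕ) + Rmax = ((b : ℕ) + 1) * Rmax := by rw [hb]; ring
        _ ≤ (a : ℕ) * Rmax := hstep
        _ = (i : ℕ) := ha.symm
    show Rmax ≤ ((i : ℤ) - (j : ℤ)).natAbs
    omega
  have hint : ∀ X : Finset (Fin N), X.Nonempty ∧ ChainDiamLE X Rmax →
      ((AFF.trues g) ∩ X).card ≤ 1 := by
    intro X hX
    rw [Finset.card_le_one]
    intro a ha b hb
    rw [Finset.mem_inter, AFF.mem_trues] at ha hb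
    by_contra hab
    have hd := hX.2 a ha.2 b hb.2
    have hsp := hspace a b ha.1 hb.1 hab
    omega
  have hterm : ∀ X : Finset (Fin N), (h X (WState (Fin N) p)) g = 0 := by
    intro X
    by_cases hX : X.Nonempty ∧ ChainDiamLE X Rmax
    · exact AFF.key (h X) X (hsupp X) (hannv X) (hannW X) p g (hint X hX) hcardg
    · rw [hdiam X hX]; rfl
  have hEg := congrFun hE g
  have hL : ((∑ X : Finset (Fin N), h X) (WState (Fin N) p)) g
      = ∑ X : Finset (Fin N), (h X (WState (Fin N) p)) g := by
    rw [LinearMap.sum_apply]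
    exact Finset.sum_apply g _ _
  have hR : (E' • WState (Fin N) p) g = E' * (p.factorial : ℂ) := by
    rw [Pi.smul_apply, smul_eq_mul, AFF.wstate_apply, if_pos hcardg]
  have hzero : E' * (p.factorial : ℂ) = 0 := by
    rw [← hR, ← hEg, hL, Finset.sum_eq_zero (fun X _ => hterm X)]
  rcases mul_eq_zero.mp hzero with hc | hc
  · exact hc
  · exact absurd hc (by exact_mod_cast Nat.factorial_ne_zero p)
end

section
/- Let V be a finite set of qubit sites, k a positive integer, and O a k-local operator on the state space. Define the iterated commutators C₀ = O and C_{m+1} = C_m S† − S† C_m. Then C_{2k+1} = 0. -/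
open scoped BigOperators
set_option linter.unusedSectionVars false

noncomputable section

section NilpAux

variable {V : Type*} [Fintype V] [DecidableEq V]

lemma basisVec_expand (ψ : QState V) : ψ = ∑ f : V → Bool, ψ f • basisVec f := by
  funext g
  rw [Finset.sum_apply]
  simp only [Pi.smul_apply, basisVec, smul_eq_mul, mul_ite, mul_one, mul_zero]
  rw [Finset.sum_ite_eq Finset.univ g ψ]
  simp

lemma end_ext {A B : Module.End ℂ (QState V)}
    (h : ∀ f, A (basisVec f) = B (basisVec f)) : A = B := by
  refine LinearMap.ext fun ψ => ?_
  rw [basisVec_expand ψ, map_sum, map_sum]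
  exact Finset.sum_congr rfl fun f _ => by rw [map_smul, map_smul, h f]

lemma creOp_basisVec (i : V) (f : V → Bool) :
    creOp i (basisVec f) =
      if f i = true then 0 else basisVec (Function.update f i true) := by
  funext g
  have lhs : creOp i (basisVec f) g
      = if g i = true then basisVec f (Function.update g i false) else 0 := rfl
  rw [lhs, apply_ite (fun φ : QState V => φ g)]
  by_cases hfi : f i = true
  · rw [if_pos hfi, Pi.zero_apply]
    split_ifs with hgi
    · simp only [basisVec]
      rw [if_neg]
      intro hgf
      rw [← hgf] at hfi
      simp at hfi
    · rfl
  · rw [if_neg hfi]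
    have hfi' : f i = false := by simpa using hfi
    simp only [basisVec]
    by_cases hgi : g i = true
    · rw [if_pos hgi]
      by_cases hgf : Function.update g i false = f
      · have hg : g = Function.update f i true := by
          funext a
          rcases eq_or_ne a i with rfl | ha
          · simp [hgi]
          · rw [Function.update_of_ne ha, ← hgf, Function.update_of_ne ha]
        rw [if_pos hgf, if_pos hg]
      · rw [if_neg hgf]
        split_ifs with hgu
        · exfalso
          apply hgf
          funext a
          rcases eq_or_ne a i with rfl | ha
          · simp [hfi']
          · rw [Function.update_of_ne ha, hgu, Function.update_of_ne ha]
        · rfl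
    · rw [if_neg hgi]
      split_ifs with hgu
      · exfalso
        apply hgi
        rw [hgu]
        simp
      · rfl

lemma commute_creOp_of_supported {O : Module.End ℂ (QState V)} {X : Finset V}
    (hO : SupportedOn O ↑X) {j : V} (hj : j ∉ X) : Commute O (creOp j) := by
  show O * creOp j = creOp j * O
  apply end_ext
  intro f
  funext g
  simp only [Module.End.mul_apply, creOp_basisVec, creOp_apply]
  by_cases hfj : f j = true
  · rw [if_pos hfj, map_zero]
    simp only [Pi.zero_apply]
    symm
    split_ifs with hgj
    · exact hO.1 f (Function.update g j false)
        ⟨j, by simpa using hj, by simp [hfj]⟩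
    · rfl
  · rw [if_neg hfj]
    have hfj' : f j = false := by simpa using hfj
    by_cases hgj : g j = true
    · rw [if_pos hgj]
      by_cases hout : ∀ i ∉ X, Function.update f j true i = g i
      · apply hO.2 (Function.update f j true) f g (Function.update g j false)
        · intro i hi
          have hiX : i ∈ X := hi
          have hij : i ≠ j := by
            intro he
            exact hj (he ▸ hiX)
          exact Function.update_of_ne hij _ _
        · intro i hi
          have hiX : i ∈ X := hi
          have hij : i ≠ j := by
            intro he
            exact hj (he ▸ hiX)
          exact (Function.update_of_ne hij _ _).symm
        · intro i hi
          exact hout i (by simpa using hi)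
        · intro i hi
          have hiX : i ∉ X := by simpa using hi
          by_cases hij : i = j
          · subst hij
            simp [hfj']
          · rw [Function.update_of_ne hij, ← hout i hiX,
              Function.update_of_ne hij]
      · push_neg at hout
        obtain ⟨i, hi, hne⟩ := hout
        have hij : i ≠ j := by
          intro he
          subst he
          exact hne (by simp [hgj])
        rw [Function.update_of_ne hij] at hne
        rw [hO.1 _ _ ⟨i, by simpa using hi, by
            rwa [Function.update_of_ne hij]⟩,
          hO.1 _ _ ⟨i, by simpa using hi, by
            rwa [Function.update_of_ne hij]⟩]
    · rw [if_neg hgj]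
      have hgj' : g j = false := by simpa using hgj
      refine hO.1 _ _ ⟨j, by simpa using hj, ?_⟩
      rw [Function.update_self, hgj']
      simp

lemma sumCre_pow_vanish {X : Finset V} :
    ∀ (m : ℕ) (ψ : QState V) (g : V → Bool),
      (X.filter fun i => g i = true).card < m →
      (((∑ i ∈ X, creOp i) ^ m) ψ) g = 0 := by
  intro m
  induction m with
  | zero => intro ψ g h; omega
  | succ m ih =>
    intro ψ g h
    rw [pow_succ', Module.End.mul_apply]
    rw [LinearMap.sum_apply, Finset.sum_apply]
    apply Finset.sum_eq_zero
    intro i hi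
    simp only [creOp_apply]
    split_ifs with hgi
    · apply ih
      have hmem : i ∈ X.filter fun a => g a = true := Finset.mem_filter.mpr ⟨hi, hgi⟩
      have hsub : (X.filter fun a => Function.update g i false a = true) ⊆
          (X.filter fun a => g a = true).erase i := by
        intro a ha
        rw [Finset.mem_filter] at ha
        have hai : a ≠ i := by
          intro he
          subst he
          simp at ha
        rw [Finset.mem_erase, Finset.mem_filter]
        rw [Function.update_of_ne hai] at ha
        exact ⟨hai, ha⟩
      have h1 := Finset.card_le_card hsub
      rw [Finset.card_erase_of_mem hmem] at h1
      have h2 : 1 ≤ (X.filter fun a => g a = true).card :=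
        Finset.card_pos.mpr ⟨i, hmem⟩
      omega
    · rfl

lemma sumCre_pow_eq_zero {X : Finset V} {k : ℕ} (hX : X.card ≤ k) :
    (∑ i ∈ X, creOp (V := V) i) ^ (k + 1) = 0 := by
  refine LinearMap.ext fun ψ => funext fun g => ?_
  rw [LinearMap.zero_apply, Pi.zero_apply]
  apply sumCre_pow_vanish
  calc (X.filter fun i => g i = true).card ≤ X.card := Finset.card_filter_le _ _
    _ ≤ k := hX
    _ < k + 1 := Nat.lt_succ_self k

lemma mulRight_pow_apply (A : Module.End ℂ (QState V)) (m : ℕ) :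
    ∀ z : Module.End ℂ (QState V),
      (((LinearMap.mulRight ℂ A : Module.End ℂ (Module.End ℂ (QState V)))) ^ m) z
        = z * A ^ m := by
  induction m with
  | zero => intro z; simp
  | succ m ih =>
    intro z
    rw [pow_succ', Module.End.mul_apply, ih, LinearMap.mulRight_apply, mul_assoc, ← pow_succ]

lemma neg_mulLeft_pow_apply (A : Module.End ℂ (QState V)) (m : ℕ) :
    ∀ z : Module.End ℂ (QState V),
      ((-(LinearMap.mulLeft ℂ A) : Module.End ℂ (Module.End ℂ (QState V))) ^ m) z
        = ((-1 : ℂ) ^ m) • (A ^ m * z) := by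
  induction m with
  | zero => intro z; simp
  | succ m ih =>
    intro z
    rw [pow_succ, Module.End.mul_apply, LinearMap.neg_apply, LinearMap.mulLeft_apply, ih]
    refine LinearMap.ext fun ψ => ?_
    simp [Module.End.mul_apply, pow_succ, LinearMap.smul_apply, LinearMap.neg_apply, mul_comm]

lemma key_summand {k : ℕ} {O : Module.End ℂ (QState V)} {X : Finset V}
    (hO : SupportedOn O ↑X) (hcard : X.card ≤ k) :
    ((LinearMap.mulRight ℂ (Sdag V) - LinearMap.mulLeft ℂ (Sdag V)) ^ (2 * k + 1)) O = 0 := by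
  set A := ∑ i ∈ X, creOp (V := V) i with hA
  set B := ∑ i ∈ Xᶜ, creOp (V := V) i with hB
  have hS : Sdag V = A + B := by
    rw [Sdag, ← Finset.sum_add_sum_compl X]
  have hAB : Commute A B :=
    Commute.sum_left _ _ _ fun i _ => Commute.sum_right _ _ _ fun j _ => creOp_commute i j
  have hOB : Commute O B :=
    Commute.sum_right _ _ _ fun j hj =>
      commute_creOp_of_supported hO (Finset.mem_compl.mp hj)
  set DA : Module.End ℂ (Module.End ℂ (QState V)) :=
    LinearMap.mulRight ℂ A - LinearMap.mulLeft ℂ A with hDA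
  have hAnil : A ^ (k + 1) = 0 := sumCre_pow_eq_zero hcard
  have hDapp : ∀ z : Module.End ℂ (QState V),
      (LinearMap.mulRight ℂ (Sdag V) - LinearMap.mulLeft ℂ (Sdag V)) z
        = (z * A - A * z) + (z * B - B * z) := by
    intro z
    simp only [LinearMap.sub_apply, LinearMap.mulRight_apply, LinearMap.mulLeft_apply, hS,
      mul_add, add_mul]
    abel
  have hDAapp : ∀ z : Module.End ℂ (QState V), DA z = z * A - A * z := by
    intro z
    rw [hDA]
    simp [LinearMap.sub_apply, LinearMap.mulRight_apply, LinearMap.mulLeft_apply]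
  have main : ∀ m, ((LinearMap.mulRight ℂ (Sdag V) - LinearMap.mulLeft ℂ (Sdag V)) ^ m) O
      = (DA ^ m) O ∧ Commute ((DA ^ m) O) B := by
    intro m
    induction m with
    | zero =>
      refine ⟨rfl, ?_⟩
      simpa using hOB
    | succ m ih =>
      constructor
      · rw [pow_succ', Module.End.mul_apply, ih.1, pow_succ', Module.End.mul_apply,
          hDapp, hDAapp]
        rw [ih.2.eq, sub_self, add_zero]
      · rw [pow_succ', Module.End.mul_apply, hDAapp]
        exact (Commute.mul_left ih.2 hAB).sub_left (Commute.mul_left hAB ih.2)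
  rw [(main (2 * k + 1)).1]
  have hc : Commute (LinearMap.mulRight ℂ A : Module.End ℂ (Module.End ℂ (QState V)))
      (-(LinearMap.mulLeft ℂ A)) := by
    refine LinearMap.ext fun z => ?_
    refine LinearMap.ext fun ψ => ?_
    simp [Module.End.mul_apply, LinearMap.neg_apply, LinearMap.mulLeft_apply,
      LinearMap.mulRight_apply]
  have hre : DA = LinearMap.mulRight ℂ A + -(LinearMap.mulLeft ℂ A) := by
    refine LinearMap.ext fun z => ?_
    refine LinearMap.ext fun ψ => ?_
    simp [hDA, LinearMap.sub_apply, LinearMap.add_apply, LinearMap.neg_apply,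
      LinearMap.mulRight_apply, LinearMap.mulLeft_apply, sub_eq_add_neg]
  rw [hre, hc.add_pow, LinearMap.sum_apply]
  apply Finset.sum_eq_zero
  intro m hm
  rw [Module.End.mul_apply, Module.End.mul_apply, Module.End.natCast_apply,
    mulRight_pow_apply, neg_mulLeft_pow_apply]
  rcases le_or_gt (k + 1) m with hmk | hmk
  · rw [pow_eq_zero_of_le hmk hAnil]
    refine LinearMap.ext fun ψ => ?_
    simp [Module.End.mul_apply]
  · have hp : k + 1 ≤ 2 * k + 1 - m := by omega
    rw [pow_eq_zero_of_le hp hAnil]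
    refine LinearMap.ext fun ψ => ?_
    simp [Module.End.mul_apply, LinearMap.smul_apply]

end NilpAux

end
/-- Nilpotent commutator: the (2k+1)-fold iterated commutator of a
k-local operator with `S†` vanishes. -/
theorem nilpotent_commutator
    {V : Type*} [Fintype V] [DecidableEq V]
    (k : ℕ) (hk : 0 < k) (O : Module.End ℂ (QState V)) (hO : IsKLocal k O)
    (C : ℕ → Module.End ℂ (QState V))
    (hC0 : C 0 = O)
    (hCs : ∀ m, C (m + 1) = C m * Sdag V - Sdag V * C m) :
    C (2 * k + 1) = 0 := by
  classical
  obtain ⟨n, h, Xt, hsupp, hcard, hsum⟩ := hO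
  set D : Module.End ℂ (Module.End ℂ (QState V)) :=
    LinearMap.mulRight ℂ (Sdag V) - LinearMap.mulLeft ℂ (Sdag V) with hD
  have hCm : ∀ m, C m = (D ^ m) O := by
    intro m
    induction m with
    | zero => simpa using hC0
    | succ m ih =>
      rw [hCs, ih, pow_succ', Module.End.mul_apply]
      simp only [hD, LinearMap.sub_apply, LinearMap.mulRight_apply, LinearMap.mulLeft_apply]
  rw [hCm, hsum, map_sum]
  apply Finset.sum_eq_zero
  intro t _
  exact key_summand (hsupp t) (hcard t)
end
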